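/- arXiv:1007.0564 — 2 statements merged into one kernel-verified Lean document; each statement's English description precedes it below -/
import Mathlib

section
/- For every φ in the Schwartz space S(ℝ^d) and every n ∈ ℕ, the weighted sum of squared Hermite coefficients Σ_{β∈ℕ^d} (2|β|+d)^{2n} (∫_{ℝ^d} φ(x) h_β(x) dx)² is finite; that is, the sequence of Hermite coefficients of a Schwartz function is rapidly decreasing. -/
open MeasureTheory

noncomputable def hermitePoly (n : ℕ) (x : ℝ) : ℝ :=
  (-1 : ℝ) ^ n * Real.exp (x ^ 2 / 2) *
    iteratedDeriv n (fun y : ℝ => Real.exp (-(y ^ 2 / 2))) x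

noncomputable def hermiteFun (n : ℕ) (x : ℝ) : ℝ :=
  (Real.sqrt (Real.sqrt (2 * Real.pi) * n.factorial))⁻¹ *
    Real.exp (-(x ^ 2 / 4)) * hermitePoly n x

noncomputable def hermiteFunMulti (d : ℕ) (α : Fin d → ℕ) (x : EuclideanSpace ℝ (Fin d)) : ℝ :=
  ∏ i, hermiteFun (α i) (x i)

noncomputable def hermCoeff (d : ℕ) (f : EuclideanSpace ℝ (Fin d) → ℝ) (β : Fin d → ℕ) : ℝ :=
  ∫ x, f x * hermiteFunMulti d β x

namespace HermAux

open Polynomial SchwartzMap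

lemma hermitePoly_eq (n : ℕ) (x : ℝ) : hermitePoly n x = aeval x (hermite n) := by
  rw [hermitePoly, iteratedDeriv_eq_iterate, Polynomial.deriv_gaussian_eq_hermite_mul_gaussian]
  have h1 : ((-1 : ℝ)) ^ n * ((-1 : ℝ)) ^ n = 1 := by
    rw [← pow_add]; exact Even.neg_one_pow ⟨n, rfl⟩
  have h2 : Real.exp (x ^ 2 / 2) * Real.exp (-(x ^ 2 / 2)) = 1 := by
    rw [← Real.exp_add]; simp
  calc (-1:ℝ) ^ n * Real.exp (x ^ 2 / 2) * ((-1) ^ n * aeval x (hermite n) *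
        Real.exp (-(x ^ 2 / 2)))
      = ((-1:ℝ) ^ n * (-1) ^ n) * (Real.exp (x ^ 2 / 2) * Real.exp (-(x ^ 2 / 2))) *
        aeval x (hermite n) := by ring
    _ = aeval x (hermite n) := by rw [h1, h2]; ring

noncomputable def cn (n : ℕ) : ℝ := (Real.sqrt (Real.sqrt (2 * Real.pi) * n.factorial))⁻¹

lemma cn_pos (n : ℕ) : 0 < cn n := by
  have h : 0 < Real.sqrt (2 * Real.pi) * n.factorial := by
    have := Real.sqrt_pos.2 (by positivity : (0:ℝ) < 2 * Real.pi)
    positivity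
  exact inv_pos.2 (Real.sqrt_pos.2 h)

lemma cn_succ (n : ℕ) : cn n = Real.sqrt (n + 1) * cn (n + 1) := by
  have h2π : (0:ℝ) < Real.sqrt (2 * Real.pi) :=
    Real.sqrt_pos.2 (by positivity)
  have hfac : ((n+1).factorial : ℝ) = (n+1) * n.factorial := by
    rw [Nat.factorial_succ]; push_cast; ring
  have key : Real.sqrt (Real.sqrt (2*Real.pi) * ((n+1).factorial : ℝ))
      = Real.sqrt ((n:ℝ)+1) * Real.sqrt (Real.sqrt (2*Real.pi) * (n.factorial : ℝ)) := by
    rw [hfac, show Real.sqrt (2*Real.pi) * (((n:ℝ)+1) * (n.factorial:ℝ))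
        = ((n:ℝ)+1) * (Real.sqrt (2*Real.pi) * (n.factorial:ℝ)) by ring,
      Real.sqrt_mul (by positivity)]
  rw [cn, cn, key, mul_inv, ← mul_assoc,
    mul_inv_cancel₀ (by positivity : Real.sqrt ((n:ℝ)+1) ≠ 0), one_mul]

/-- derivative of (integer) Hermite polynomial -/
lemma derivative_hermite (n : ℕ) :
    derivative (hermite (n+1)) = (C (n+1 : ℤ)) * hermite n := by
  induction n with
  | zero => simp [hermite_one, hermite_zero]
  | succ n ih =>
      rw [hermite_succ (n+1), derivative_sub, derivative_mul, derivative_X, one_mul, ih,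
        derivative_mul, derivative_C, zero_mul, hermite_succ n]
      have hC : (C ((n:ℤ)+1+1) : Polynomial ℤ) = C ((n:ℤ)+1) + 1 := by
        rw [← C_1, ← C_add]
      push_cast
      rw [hC]
      ring

noncomputable def pg (p : Polynomial ℝ) : ℝ → ℝ := fun x => p.eval x * Real.exp (-(x^2/4))

noncomputable def pdv (p : Polynomial ℝ) : Polynomial ℝ := derivative p - C 2⁻¹ * (X * p)

lemma pg_hasDerivAt (p : Polynomial ℝ) (x : ℝ) : HasDerivAt (pg p) (pg (pdv p) x) x := by
  have hexp : HasDerivAt (fun y : ℝ => Real.exp (-(y^2/4))) (-(x/2) * Real.exp (-(x^2/4))) x := by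
    have h1 : HasDerivAt (fun y : ℝ => -(y^2/4)) (-(x/2)) x := by
      have := ((hasDerivAt_pow 2 x).div_const 4).neg
      refine this.congr_deriv ?_
      ring
    simpa [mul_comm] using h1.exp
  have := (p.hasDerivAt x).mul hexp
  refine this.congr_deriv ?_
  simp [pg, pdv]
  ring

lemma pg_continuous (p : Polynomial ℝ) : Continuous (pg p) := by
  exact p.continuous.mul (Real.continuous_exp.comp (by continuity))

lemma pg_differentiable (p : Polynomial ℝ) : Differentiable ℝ (pg p) :=
  fun x => (pg_hasDerivAt p x).differentiableAt

lemma integrable_pow_gauss (k : ℕ) {b : ℝ} (hb : 0 < b) :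
    Integrable (fun x : ℝ => x ^ k * Real.exp (-b * x^2)) := by
  have := integrable_rpow_mul_exp_neg_mul_sq hb (s := k) (by exact_mod_cast neg_one_lt_zero.trans_le (Nat.cast_nonneg k))
  simpa [Real.rpow_natCast] using this

lemma integrable_poly_gauss (p : Polynomial ℝ) {b : ℝ} (hb : 0 < b) :
    Integrable (fun x : ℝ => p.eval x * Real.exp (-b * x^2)) := by
  have : (fun x : ℝ => p.eval x * Real.exp (-b * x^2)) = fun x =>
      ∑ k ∈ Finset.range (p.natDegree + 1), p.coeff k * (x ^ k * Real.exp (-b * x^2)) := by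
    funext x
    rw [Polynomial.eval_eq_sum_range, Finset.sum_mul]
    simp [mul_assoc]
  rw [this]
  exact integrable_finset_sum _ (fun k _ => (integrable_pow_gauss k hb).const_mul _)

lemma pg_integrable (p : Polynomial ℝ) : Integrable (pg p) := by
  have := integrable_poly_gauss p (b := 4⁻¹) (by norm_num)
  convert this using 2 with x
  rw [pg]
  ring_nf

lemma pg_mul_integrable (p q : Polynomial ℝ) : Integrable (fun x => pg p x * pg q x) := by
  have := integrable_poly_gauss (p * q) (b := 2⁻¹) (by norm_num)
  convert this using 2 with x
  rw [pg, pg]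
  rw [show p.eval x * Real.exp (-(x^2/4)) * (q.eval x * Real.exp (-(x^2/4)))
      = (p.eval x * q.eval x) * (Real.exp (-(x^2/4)) * Real.exp (-(x^2/4))) by ring,
    ← Real.exp_add]
  simp only [eval_mul]
  ring_nf

noncomputable def HP (n : ℕ) : Polynomial ℝ := C (cn n) * (hermite n).map (Int.castRingHom ℝ)

lemma hermiteFun_eq (n : ℕ) : hermiteFun n = pg (HP n) := by
  funext x
  rw [hermiteFun, hermitePoly_eq, pg, HP, eval_mul, eval_C, eval_map, aeval_def,
    algebraMap_int_eq, cn]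
  ring

lemma derivative_HP (n : ℕ) :
    derivative (HP n) = C (Real.sqrt n) * HP (n - 1) := by
  cases n with
  | zero => simp [HP, hermite_zero]
  | succ n =>
      rw [HP, derivative_C_mul, Polynomial.derivative_map,
        derivative_hermite, Polynomial.map_mul, map_C]
      rw [show (n + 1 : ℕ) - 1 = n from rfl, HP, ← mul_assoc, ← C_mul, ← mul_assoc, ← C_mul]
      congr 2
      simp only [map_add, map_one, eq_intCast, Int.cast_natCast]
      push_cast
      have h := cn_succ n
      have h2 : Real.sqrt ((n:ℝ)+1) * Real.sqrt ((n:ℝ)+1) = (n:ℝ)+1 :=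
        Real.mul_self_sqrt (by positivity)
      calc cn (n+1) * ((n:ℝ)+1) = cn (n+1) * (Real.sqrt ((n:ℝ)+1) * Real.sqrt ((n:ℝ)+1)) := by
            rw [h2]
        _ = Real.sqrt ((n:ℝ)+1) * cn n := by rw [h]; ring

lemma raise_HP (n : ℕ) :
    X * HP n - derivative (HP n) = C (Real.sqrt (n + 1)) * HP (n + 1) := by
  rw [HP, derivative_C_mul, Polynomial.derivative_map, mul_comm X, mul_assoc, ← Polynomial.map_X (f := Int.castRingHom ℝ), ← Polynomial.map_mul, ← mul_sub, ← Polynomial.map_sub, mul_comm _ X, ← hermite_succ]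
  rw [HP, ← mul_assoc, ← C_mul, cn_succ n]

variable {d : ℕ}

noncomputable def PiP (P : Fin d → Polynomial ℝ) : EuclideanSpace ℝ (Fin d) → ℝ :=
  fun x => ∏ i, pg (P i) (x i)

noncomputable def ed (d : ℕ) (i : Fin d) : EuclideanSpace ℝ (Fin d) := EuclideanSpace.single i 1

noncomputable def Pf {d : ℕ} (β : Fin d → ℕ) : Fin d → Polynomial ℝ := fun j => HP (β j)

noncomputable def Hb {d : ℕ} (β : Fin d → ℕ) : EuclideanSpace ℝ (Fin d) → ℝ := PiP (Pf β)

lemma integrableE (f : Fin d → ℝ → ℝ) (h : ∀ i, Integrable (f i)) :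
    Integrable (fun x : EuclideanSpace ℝ (Fin d) => ∏ i, f i (x i)) := by
  have hpi : Integrable (fun y : Fin d → ℝ => ∏ i, f i (y i)) :=
    Integrable.fintype_prod (𝕜 := ℝ) h
  have key := (MeasurePreserving.symm _ (EuclideanSpace.volume_preserving_symm_measurableEquiv_toLp (Fin d))).integrable_comp_emb
    (MeasurableEquiv.measurableEmbedding _)
    (g := fun x : EuclideanSpace ℝ (Fin d) => ∏ i, f i (x i))
  rw [← key]
  exact hpi

lemma integralE (f : Fin d → ℝ → ℝ) :
    ∫ x : EuclideanSpace ℝ (Fin d), ∏ i, f i (x i) = ∏ i, ∫ t : ℝ, f i t := by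
  have key := (MeasurePreserving.symm _ (EuclideanSpace.volume_preserving_symm_measurableEquiv_toLp (Fin d))).integral_comp
    (MeasurableEquiv.measurableEmbedding _)
    (fun x : EuclideanSpace ℝ (Fin d) => ∏ i, f i (x i))
  rw [← key]
  exact MeasureTheory.integral_fintype_prod_eq_prod (ι := Fin d) (f := fun i (t : ℝ) => f i t)

lemma PiP_integrable (P : Fin d → Polynomial ℝ) : Integrable (PiP P) :=
  integrableE _ (fun _ => pg_integrable _)

lemma PiP_mul_integrable (P Q : Fin d → Polynomial ℝ) :
    Integrable (fun x => PiP P x * PiP Q x) := by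
  have : (fun x : EuclideanSpace ℝ (Fin d) => PiP P x * PiP Q x)
      = fun x => ∏ i, (fun t => pg (P i) t * pg (Q i) t) (x i) := by
    funext x; rw [PiP, PiP, ← Finset.prod_mul_distrib]
  rw [this]
  exact integrableE _ (fun i => pg_mul_integrable _ _)

lemma PiP_hasFDerivAt (P : Fin d → Polynomial ℝ) (x : EuclideanSpace ℝ (Fin d)) :
    HasFDerivAt (PiP P)
      (∑ i, (∏ j ∈ Finset.univ.erase i, pg (P j) (x j)) •
        (pg (pdv (P i)) (x i) • (EuclideanSpace.proj i : EuclideanSpace ℝ (Fin d) →L[ℝ] ℝ))) x := by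
  refine HasFDerivAt.finset_prod (fun i _ => ?_)
  have hproj : HasFDerivAt (fun y : EuclideanSpace ℝ (Fin d) => y i)
      (EuclideanSpace.proj (𝕜 := ℝ) i) x :=
    (EuclideanSpace.proj (𝕜 := ℝ) i).hasFDerivAt
  exact (pg_hasDerivAt (P i) (x i)).comp_hasFDerivAt x hproj

lemma PiP_differentiable (P : Fin d → Polynomial ℝ) : Differentiable ℝ (PiP P) :=
  fun x => (PiP_hasFDerivAt P x).differentiableAt

lemma PiP_update (P : Fin d → Polynomial ℝ) (i : Fin d) (q : Polynomial ℝ)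
    (x : EuclideanSpace ℝ (Fin d)) :
    PiP (Function.update P i q) x = pg q (x i) * ∏ j ∈ Finset.univ.erase i, pg (P j) (x j) := by
  rw [PiP]
  rw [Finset.prod_congr rfl (fun j _ => show pg (Function.update P i q j) (x j)
      = Function.update (fun j => pg (P j) (x j)) i (pg q (x i)) j from ?_)]
  · rw [Finset.prod_update_of_mem (Finset.mem_univ i)]
    congr 1
    exact (Finset.sdiff_singleton_eq_erase i Finset.univ) ▸ rfl
  · rcases eq_or_ne j i with rfl | h
    · simp
    · simp [Function.update_of_ne h]

lemma PiP_self_eq (P : Fin d → Polynomial ℝ) (i : Fin d) (x : EuclideanSpace ℝ (Fin d)) :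
    PiP P x = pg (P i) (x i) * ∏ j ∈ Finset.univ.erase i, pg (P j) (x j) := by
  conv_lhs => rw [← Function.update_eq_self i P]
  exact PiP_update P i (P i) x

lemma PiP_fderiv_apply (P : Fin d → Polynomial ℝ) (x : EuclideanSpace ℝ (Fin d)) (i : Fin d) :
    fderiv ℝ (PiP P) x (EuclideanSpace.single i 1)
      = PiP (Function.update P i (pdv (P i))) x := by
  rw [(PiP_hasFDerivAt P x).fderiv, PiP_update]
  rw [ContinuousLinearMap.sum_apply]
  rw [Finset.sum_eq_single i]
  · simp [mul_comm]
  · intro j _ hj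
    simp [EuclideanSpace.single_apply, hj, hj.symm]
  · simp

lemma PiP_continuous {d : ℕ} (P : Fin d → Polynomial ℝ) : Continuous (PiP P) := by
  apply continuous_finset_prod
  intro i _
  exact (pg_continuous (P i)).comp (EuclideanSpace.proj (𝕜 := ℝ) i).continuous

lemma Pf_update (β : Fin d → ℕ) (i : Fin d) (m : ℕ) :
    Pf (Function.update β i m) = Function.update (Pf β) i (HP m) := by
  funext j
  rcases eq_or_ne j i with rfl | h
  · simp [Pf]
  · simp [Pf, Function.update_of_ne h]

lemma hb_eq (β : Fin d → ℕ) : hermiteFunMulti d β = PiP (Pf β) := by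
  funext x
  exact Finset.prod_congr rfl fun j _ => by rw [hermiteFun_eq (β j)]; rfl

/-- 1d computation: `pg (pdv p) + (x/2) pg p = pg p'` -/
lemma pg_pdv_add (p : Polynomial ℝ) (t : ℝ) :
    pg (pdv p) t + 2⁻¹ * t * pg p t = pg (derivative p) t := by
  simp only [pg, pdv, eval_sub, eval_mul, eval_C, eval_X]
  ring

lemma pg_pdv_sub (p : Polynomial ℝ) (t : ℝ) :
    -(pg (pdv p) t) + 2⁻¹ * t * pg p t = pg (X * p - derivative p) t := by
  simp only [pg, pdv, eval_sub, eval_mul, eval_C, eval_X]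
  ring

/-- lowering identity -/
lemma lower_pt (β : Fin d → ℕ) (i : Fin d) (x : EuclideanSpace ℝ (Fin d)) :
    fderiv ℝ (PiP (Pf β)) x (ed d i) + 2⁻¹ * x i * PiP (Pf β) x
      = Real.sqrt (β i) * PiP (Pf (Function.update β i (β i - 1))) x := by
  rw [ed, PiP_fderiv_apply, Pf_update, PiP_update, PiP_update, PiP_self_eq (Pf β) i x]
  have h1 : pg (pdv (Pf β i)) (x i) + 2⁻¹ * x i * pg (Pf β i) (x i)
      = Real.sqrt (β i) * pg (HP (β i - 1)) (x i) := by
    rw [pg_pdv_add]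
    show pg (derivative (HP (β i))) (x i) = _
    rw [derivative_HP]
    simp [pg, eval_mul, eval_C]
    ring
  calc pg (pdv (Pf β i)) (x i) * ∏ j ∈ Finset.univ.erase i, pg (Pf β j) (x j)
        + 2⁻¹ * x i * (pg (Pf β i) (x i) * ∏ j ∈ Finset.univ.erase i, pg (Pf β j) (x j))
      = (pg (pdv (Pf β i)) (x i) + 2⁻¹ * x i * pg (Pf β i) (x i))
          * ∏ j ∈ Finset.univ.erase i, pg (Pf β j) (x j) := by ring
    _ = Real.sqrt (β i) * (pg (HP (β i - 1)) (x i)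
          * ∏ j ∈ Finset.univ.erase i, pg (Pf β j) (x j)) := by rw [h1]; ring

/-- raising identity -/
lemma raise_pt (β : Fin d → ℕ) (i : Fin d) (x : EuclideanSpace ℝ (Fin d)) :
    -(fderiv ℝ (PiP (Pf β)) x (ed d i)) + 2⁻¹ * x i * PiP (Pf β) x
      = Real.sqrt (β i + 1) * PiP (Pf (Function.update β i (β i + 1))) x := by
  rw [ed, PiP_fderiv_apply, Pf_update, PiP_update, PiP_update, PiP_self_eq (Pf β) i x]
  have h1 : -(pg (pdv (Pf β i)) (x i)) + 2⁻¹ * x i * pg (Pf β i) (x i)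
      = Real.sqrt (β i + 1) * pg (HP (β i + 1)) (x i) := by
    rw [pg_pdv_sub]
    show pg (X * HP (β i) - derivative (HP (β i))) (x i) = _
    rw [raise_HP]
    simp [pg, eval_mul, eval_C]
    ring
  calc -(pg (pdv (Pf β i)) (x i) * ∏ j ∈ Finset.univ.erase i, pg (Pf β j) (x j))
        + 2⁻¹ * x i * (pg (Pf β i) (x i) * ∏ j ∈ Finset.univ.erase i, pg (Pf β j) (x j))
      = (-(pg (pdv (Pf β i)) (x i)) + 2⁻¹ * x i * pg (Pf β i) (x i))
          * ∏ j ∈ Finset.univ.erase i, pg (Pf β j) (x j) := by ring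
    _ = Real.sqrt (β i + 1) * (pg (HP (β i + 1)) (x i)
          * ∏ j ∈ Finset.univ.erase i, pg (Pf β j) (x j)) := by rw [h1]; ring

lemma PiP_coord (P : Fin d → Polynomial ℝ) (i : Fin d) (x : EuclideanSpace ℝ (Fin d)) :
    x i * PiP P x = PiP (Function.update P i (X * P i)) x := by
  rw [PiP_update, PiP_self_eq P i x, pg, pg, eval_mul, eval_X]
  ring

/-- A Schwartz function is uniformly bounded. -/
lemma schwartz_bound (χ : SchwartzMap (EuclideanSpace ℝ (Fin d)) ℝ) :
    ∃ C, ∀ x, ‖χ x‖ ≤ C := by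
  obtain ⟨C, hC⟩ := χ.decay 0 0
  exact ⟨C, fun x => by simpa using hC.2 x⟩

lemma schwartz_mul_integrable (χ : SchwartzMap (EuclideanSpace ℝ (Fin d)) ℝ)
    {g : EuclideanSpace ℝ (Fin d) → ℝ} (hg : Integrable g) :
    Integrable (fun x => χ x * g x) :=
  hg.bdd_mul χ.continuous.aestronglyMeasurable (Filter.Eventually.of_forall (schwartz_bound χ).choose_spec)

lemma mulPiP_integrable (χ : SchwartzMap (EuclideanSpace ℝ (Fin d)) ℝ)
    (P : Fin d → Polynomial ℝ) (i : Fin d) :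
    Integrable (fun x => 2⁻¹ * x i * χ x * PiP P x) := by
  have : (fun x : EuclideanSpace ℝ (Fin d) => 2⁻¹ * x i * χ x * PiP P x)
      = fun x => 2⁻¹ * (χ x * PiP (Function.update P i (X * P i)) x) := by
    funext x
    rw [← PiP_coord]
    ring
  rw [this]
  exact (schwartz_mul_integrable χ (PiP_integrable _)).const_mul _

lemma fderiv_mul_PiP_integrable (ψ : SchwartzMap (EuclideanSpace ℝ (Fin d)) ℝ)
    (P : Fin d → Polynomial ℝ) (i : Fin d) :
    Integrable (fun x => fderiv ℝ (⇑ψ) x (ed d i) * PiP P x) := by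
  have : (fun x : EuclideanSpace ℝ (Fin d) => fderiv ℝ (⇑ψ) x (ed d i) * PiP P x)
      = fun x => ((LineDeriv.lineDerivOp (ed d i) ψ : SchwartzMap (EuclideanSpace ℝ (Fin d)) ℝ)) x * PiP P x := by
    funext x
    rw [SchwartzMap.lineDerivOp_apply_eq_fderiv]
  rw [this]
  exact schwartz_mul_integrable _ (PiP_integrable _)

lemma mul_fderivPiP_integrable (ψ : SchwartzMap (EuclideanSpace ℝ (Fin d)) ℝ)
    (P : Fin d → Polynomial ℝ) (i : Fin d) :
    Integrable (fun x => ψ x * fderiv ℝ (PiP P) x (ed d i)) := by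
  have : (fun x : EuclideanSpace ℝ (Fin d) => ψ x * fderiv ℝ (PiP P) x (ed d i))
      = fun x => ψ x * PiP (Function.update P i (pdv (P i))) x := by
    funext x
    rw [ed, PiP_fderiv_apply]
  rw [this]
  exact schwartz_mul_integrable _ (PiP_integrable _)

/-- Integration by parts: Schwartz against PiP. -/
lemma ibp_schwartz (ψ : SchwartzMap (EuclideanSpace ℝ (Fin d)) ℝ)
    (P : Fin d → Polynomial ℝ) (i : Fin d) :
    ∫ x, ψ x * fderiv ℝ (PiP P) x (ed d i)
      = - ∫ x, fderiv ℝ (⇑ψ) x (ed d i) * PiP P x :=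
  integral_mul_fderiv_eq_neg_fderiv_mul_of_integrable
    (fderiv_mul_PiP_integrable ψ P i) (mul_fderivPiP_integrable ψ P i)
    (schwartz_mul_integrable ψ (PiP_integrable P)) (fun x _ => ψ.differentiableAt) (fun x _ => PiP_differentiable P x)

/-- adjoint identity, lowering on the Schwartz side. -/
lemma adj_lower (ψ : SchwartzMap (EuclideanSpace ℝ (Fin d)) ℝ)
    (P : Fin d → Polynomial ℝ) (i : Fin d) :
    ∫ x, (fderiv ℝ (⇑ψ) x (ed d i) + 2⁻¹ * x i * ψ x) * PiP P x
      = ∫ x, ψ x * (-(fderiv ℝ (PiP P) x (ed d i)) + 2⁻¹ * x i * PiP P x) := by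
  have hsplitL : (fun x => (fderiv ℝ (⇑ψ) x (ed d i) + 2⁻¹ * x i * ψ x) * PiP P x)
      = fun x => fderiv ℝ (⇑ψ) x (ed d i) * PiP P x + 2⁻¹ * x i * ψ x * PiP P x := by
    funext x; ring
  have hsplitR : (fun x => ψ x * (-(fderiv ℝ (PiP P) x (ed d i)) + 2⁻¹ * x i * PiP P x))
      = fun x => 2⁻¹ * x i * ψ x * PiP P x - ψ x * fderiv ℝ (PiP P) x (ed d i) := by
    funext x; ring
  rw [hsplitL, hsplitR,
    integral_add (fderiv_mul_PiP_integrable ψ P i) (mulPiP_integrable ψ P i),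
    integral_sub (mulPiP_integrable ψ P i) (mul_fderivPiP_integrable ψ P i),
    ibp_schwartz ψ P i]
  ring

/-- adjoint identity, raising on the Schwartz side. -/
lemma adj_raise (ψ : SchwartzMap (EuclideanSpace ℝ (Fin d)) ℝ)
    (P : Fin d → Polynomial ℝ) (i : Fin d) :
    ∫ x, (-(fderiv ℝ (⇑ψ) x (ed d i)) + 2⁻¹ * x i * ψ x) * PiP P x
      = ∫ x, ψ x * (fderiv ℝ (PiP P) x (ed d i) + 2⁻¹ * x i * PiP P x) := by
  have hsplitL : (fun x => (-(fderiv ℝ (⇑ψ) x (ed d i)) + 2⁻¹ * x i * ψ x) * PiP P x)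
      = fun x => 2⁻¹ * x i * ψ x * PiP P x - fderiv ℝ (⇑ψ) x (ed d i) * PiP P x := by
    funext x; ring
  have hsplitR : (fun x => ψ x * (fderiv ℝ (PiP P) x (ed d i) + 2⁻¹ * x i * PiP P x))
      = fun x => ψ x * fderiv ℝ (PiP P) x (ed d i) + 2⁻¹ * x i * ψ x * PiP P x := by
    funext x; ring
  rw [hsplitL, hsplitR,
    integral_sub (mulPiP_integrable ψ P i) (fderiv_mul_PiP_integrable ψ P i),
    integral_add (mul_fderivPiP_integrable ψ P i) (mulPiP_integrable ψ P i),
    ibp_schwartz ψ P i]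
  ring

/-- Integration by parts between two PiP functions. -/
lemma ibp_pp (Q P : Fin d → Polynomial ℝ) (i : Fin d) :
    ∫ x, PiP Q x * fderiv ℝ (PiP P) x (ed d i)
      = - ∫ x, fderiv ℝ (PiP Q) x (ed d i) * PiP P x := by
  apply integral_mul_fderiv_eq_neg_fderiv_mul_of_integrable
  · have : (fun x : EuclideanSpace ℝ (Fin d) => fderiv ℝ (PiP Q) x (ed d i) * PiP P x)
        = fun x => PiP (Function.update Q i (pdv (Q i))) x * PiP P x := by
      funext x; rw [ed, PiP_fderiv_apply]
    rw [this]; exact PiP_mul_integrable _ _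
  · have : (fun x : EuclideanSpace ℝ (Fin d) => PiP Q x * fderiv ℝ (PiP P) x (ed d i))
        = fun x => PiP Q x * PiP (Function.update P i (pdv (P i))) x := by
      funext x; rw [ed, PiP_fderiv_apply]
    rw [this]; exact PiP_mul_integrable _ _
  · exact PiP_mul_integrable _ _
  · exact fun x _ => PiP_differentiable _ x
  · exact fun x _ => PiP_differentiable _ x

lemma coordPiP_mul_PiP_integrable (Q P : Fin d → Polynomial ℝ) (i : Fin d) :
    Integrable (fun x => 2⁻¹ * x i * PiP Q x * PiP P x) := by
  have : (fun x : EuclideanSpace ℝ (Fin d) => 2⁻¹ * x i * PiP Q x * PiP P x)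
      = fun x => 2⁻¹ * (PiP (Function.update Q i (X * Q i)) x * PiP P x) := by
    funext x; rw [← PiP_coord]; ring
  rw [this]
  exact (PiP_mul_integrable _ _).const_mul _

/-- adjoint identity between two PiP functions (raising on the left). -/
lemma adj_pp (Q P : Fin d → Polynomial ℝ) (i : Fin d) :
    ∫ x, (-(fderiv ℝ (PiP Q) x (ed d i)) + 2⁻¹ * x i * PiP Q x) * PiP P x
      = ∫ x, PiP Q x * (fderiv ℝ (PiP P) x (ed d i) + 2⁻¹ * x i * PiP P x) := by
  have hL : Integrable (fun x => fderiv ℝ (PiP Q) x (ed d i) * PiP P x) := by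
    have : (fun x : EuclideanSpace ℝ (Fin d) => fderiv ℝ (PiP Q) x (ed d i) * PiP P x)
        = fun x => PiP (Function.update Q i (pdv (Q i))) x * PiP P x := by
      funext x; rw [ed, PiP_fderiv_apply]
    rw [this]; exact PiP_mul_integrable _ _
  have hR : Integrable (fun x => PiP Q x * fderiv ℝ (PiP P) x (ed d i)) := by
    have : (fun x : EuclideanSpace ℝ (Fin d) => PiP Q x * fderiv ℝ (PiP P) x (ed d i))
        = fun x => PiP Q x * PiP (Function.update P i (pdv (P i))) x := by
      funext x; rw [ed, PiP_fderiv_apply]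
    rw [this]; exact PiP_mul_integrable _ _
  have hsplitL : (fun x => (-(fderiv ℝ (PiP Q) x (ed d i)) + 2⁻¹ * x i * PiP Q x) * PiP P x)
      = fun x => 2⁻¹ * x i * PiP Q x * PiP P x - fderiv ℝ (PiP Q) x (ed d i) * PiP P x := by
    funext x; ring
  have hsplitR : (fun x => PiP Q x * (fderiv ℝ (PiP P) x (ed d i) + 2⁻¹ * x i * PiP P x))
      = fun x => PiP Q x * fderiv ℝ (PiP P) x (ed d i) + 2⁻¹ * x i * PiP Q x * PiP P x := by
    funext x; ring
  rw [hsplitL, hsplitR,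
    integral_sub (coordPiP_mul_PiP_integrable Q P i) hL,
    integral_add hR (coordPiP_mul_PiP_integrable Q P i),
    ibp_pp Q P i]
  ring

lemma update_pred_add_one {α : Fin d → ℕ} {i : Fin d} (hi : 1 ≤ α i) :
    Function.update (Function.update α i (α i - 1)) i
      (Function.update α i (α i - 1) i + 1) = α := by
  funext j
  rcases eq_or_ne j i with rfl | h
  · simp [Function.update_self]
    omega
  · simp [Function.update_of_ne h]

lemma ortho_step (α β : Fin d → ℕ) (i : Fin d) (hi : 1 ≤ α i) :
    Real.sqrt (α i) * ∫ x, Hb α x * Hb β x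
      = Real.sqrt (β i) * ∫ x, Hb (Function.update α i (α i - 1)) x
          * Hb (Function.update β i (β i - 1)) x := by
  set α' := Function.update α i (α i - 1) with hα'
  have hkey : ∀ x, Real.sqrt (α i) * Hb α x
      = -(fderiv ℝ (PiP (Pf α')) x (ed d i)) + 2⁻¹ * x i * PiP (Pf α') x := by
    intro x
    have h := raise_pt α' i x
    rw [update_pred_add_one hi] at h
    have hv : α' i + 1 = α i := by
      rw [hα', Function.update_self]; omega
    rw [show ((α' i : ℝ) + 1) = ((α i : ℝ)) by exact_mod_cast congrArg Nat.cast hv] at h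
    exact h.symm
  calc Real.sqrt (α i) * ∫ x, Hb α x * Hb β x
      = ∫ x, (Real.sqrt (α i) * Hb α x) * Hb β x := by
        rw [← integral_const_mul]; congr 1; funext x; ring
    _ = ∫ x, (-(fderiv ℝ (PiP (Pf α')) x (ed d i)) + 2⁻¹ * x i * PiP (Pf α') x)
          * PiP (Pf β) x := by
        congr 1; funext x; rw [← hkey x]; rfl
    _ = ∫ x, PiP (Pf α') x * (fderiv ℝ (PiP (Pf β)) x (ed d i)
          + 2⁻¹ * x i * PiP (Pf β) x) := adj_pp _ _ i
    _ = ∫ x, Real.sqrt (β i) * (Hb α' x * Hb (Function.update β i (β i - 1)) x) := by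
        congr 1; funext x; rw [lower_pt β i x]; simp only [Hb]; ring
    _ = Real.sqrt (β i) * ∫ x, Hb α' x * Hb (Function.update β i (β i - 1)) x := by
        rw [integral_const_mul]

lemma Hb_zero_sq :
    ∫ x, Hb (fun _ : Fin d => 0) x * Hb (fun _ : Fin d => 0) x = 1 := by
  have hHP0 : HP 0 = C (cn 0) := by
    rw [HP, hermite_zero, Polynomial.map_C]
    simp
  have h1d : ∫ t : ℝ, pg (HP 0) t * pg (HP 0) t = 1 := by
    have heq : (fun t : ℝ => pg (HP 0) t * pg (HP 0) t)
        = fun t : ℝ => (cn 0)^2 * Real.exp (-(2⁻¹) * t^2) := by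
      funext t
      rw [pg, hHP0, eval_C]
      rw [show cn 0 * Real.exp (-(t^2/4)) * (cn 0 * Real.exp (-(t^2/4)))
          = (cn 0)^2 * (Real.exp (-(t^2/4)) * Real.exp (-(t^2/4))) by ring, ← Real.exp_add]
      congr 2
      ring
    rw [heq, integral_const_mul, integral_gaussian]
    have hcn : (cn 0)^2 = (Real.sqrt (2 * Real.pi))⁻¹ := by
      rw [cn]
      rw [Nat.factorial_zero]
      push_cast
      rw [mul_one, inv_pow, Real.sq_sqrt (Real.sqrt_nonneg _)]
    rw [hcn, show Real.pi / 2⁻¹ = 2 * Real.pi by ring]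
    exact inv_mul_cancel₀ (by positivity)
  have : (fun x : EuclideanSpace ℝ (Fin d) => Hb (fun _ => 0) x * Hb (fun _ => 0) x)
      = fun x => ∏ i, (fun t => pg (HP 0) t * pg (HP 0) t) (x i) := by
    funext x
    rw [Hb, PiP, ← Finset.prod_mul_distrib]
    rfl
  rw [this, integralE (f := fun _ t => pg (HP 0) t * pg (HP 0) t)]
  simp [h1d]

lemma sum_update_pred {α : Fin d → ℕ} {i : Fin d} (hi : 1 ≤ α i) :
    ∑ j, Function.update α i (α i - 1) j = (∑ j, α j) - 1 := by
  rw [Finset.sum_update_of_mem (Finset.mem_univ i), Finset.sdiff_singleton_eq_erase]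
  have h2 := Finset.add_sum_erase Finset.univ α (Finset.mem_univ i)
  omega

lemma ortho : ∀ (N : ℕ) (α β : Fin d → ℕ), (∑ i, α i) = N →
    ∫ x, Hb α x * Hb β x = if α = β then 1 else 0 := by
  intro N
  induction N using Nat.strong_induction_on with
  | _ N IH =>
    intro α β hN
    rcases eq_or_ne α β with rfl | hne
    · rw [if_pos rfl]
      rcases Nat.eq_zero_or_pos N with rfl | hpos
      · have hz : α = fun _ => 0 := by
          funext i
          have := Finset.sum_eq_zero_iff.mp hN
          exact this i (Finset.mem_univ i)
        rw [hz]
        exact Hb_zero_sq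
      · obtain ⟨i, hi⟩ : ∃ i, 1 ≤ α i := by
          by_contra h
          push_neg at h
          have : ∀ i ∈ Finset.univ, α i = 0 := fun i _ => by have := h i; omega
          rw [Finset.sum_eq_zero this] at hN
          omega
        have step := ortho_step α α i hi
        have hsum' := sum_update_pred hi
        have hIH := IH (N - 1) (by omega) (Function.update α i (α i - 1))
          (Function.update α i (α i - 1)) (by rw [hsum', hN])
        rw [if_pos rfl] at hIH
        rw [hIH, mul_one] at step
        have hne0 : Real.sqrt (α i) ≠ 0 :=
          ne_of_gt (Real.sqrt_pos.2 (by exact_mod_cast hi))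
        field_simp at step
        simpa [sq] using step
    · rw [if_neg hne]
      by_cases hα : ∃ i, 1 ≤ α i
      · obtain ⟨i, hi⟩ := hα
        have step := ortho_step α β i hi
        have hne0 : Real.sqrt (α i) ≠ 0 :=
          ne_of_gt (Real.sqrt_pos.2 (by exact_mod_cast hi))
        have hNpos : 1 ≤ N := by
          have := Finset.single_le_sum (f := α) (fun j _ => Nat.zero_le (α j))
            (Finset.mem_univ i)
          omega
        by_cases hβ : 1 ≤ β i
        · have hIH := IH (N - 1) (by omega) (Function.update α i (α i - 1))
            (Function.update β i (β i - 1)) (by rw [sum_update_pred hi, hN])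
          have hne' : Function.update α i (α i - 1) ≠ Function.update β i (β i - 1) := by
            intro hcontra
            apply hne
            have h1 := update_pred_add_one hi
            have h2 := update_pred_add_one hβ
            rw [← h1, ← h2, hcontra]
          rw [if_neg hne'] at hIH
          rw [hIH, mul_zero] at step
          exact (mul_eq_zero.mp step).resolve_left hne0
        · have hβ0 : (β i : ℝ) = 0 := by
            have : β i = 0 := by omega
            exact_mod_cast congrArg Nat.cast this
          rw [hβ0, Real.sqrt_zero, zero_mul] at step
          exact (mul_eq_zero.mp step).resolve_left hne0
      · push_neg at hα
        obtain ⟨i, hi⟩ : ∃ i, 1 ≤ β i := by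
          by_contra h
          push_neg at h
          apply hne
          funext j
          have h1 := hα j
          have h2 := h j
          omega
        have step := ortho_step β α i hi
        have hα0 : (α i : ℝ) = 0 := by
          have := hα i
          have : α i = 0 := by omega
          exact_mod_cast congrArg Nat.cast this
        rw [hα0, Real.sqrt_zero, zero_mul] at step
        have hne0 : Real.sqrt (β i) ≠ 0 :=
          ne_of_gt (Real.sqrt_pos.2 (by exact_mod_cast hi))
        have hz : ∫ x, Hb β x * Hb α x = 0 :=
          (mul_eq_zero.mp step).resolve_left hne0
        rw [show (fun x => Hb α x * Hb β x) = fun x => Hb β x * Hb α x from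
          funext fun x => mul_comm _ _]
        exact hz

/-- multiplication by `x_i/2` as an operator on Schwartz space -/
noncomputable def mulCoordCLM (d : ℕ) (i : Fin d) :
    SchwartzMap (EuclideanSpace ℝ (Fin d)) ℝ →L[ℝ] SchwartzMap (EuclideanSpace ℝ (Fin d)) ℝ :=
  SchwartzMap.bilinLeftCLM (ContinuousLinearMap.mul ℝ ℝ)
    (((2⁻¹ : ℝ) • (EuclideanSpace.proj i : EuclideanSpace ℝ (Fin d) →L[ℝ] ℝ)).hasTemperateGrowth)

lemma mulCoordCLM_apply (i : Fin d) (ψ : SchwartzMap (EuclideanSpace ℝ (Fin d)) ℝ)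
    (x : EuclideanSpace ℝ (Fin d)) :
    mulCoordCLM d i ψ x = 2⁻¹ * x i * ψ x := by
  show ψ x * ((2⁻¹ : ℝ) • (EuclideanSpace.proj i : EuclideanSpace ℝ (Fin d) →L[ℝ] ℝ)) x = _
  simp [smul_eq_mul]
  ring

noncomputable def aSch {d : ℕ} (i : Fin d) (ψ : SchwartzMap (EuclideanSpace ℝ (Fin d)) ℝ) :
    SchwartzMap (EuclideanSpace ℝ (Fin d)) ℝ :=
  (LineDeriv.lineDerivOp (ed d i) ψ : SchwartzMap (EuclideanSpace ℝ (Fin d)) ℝ) + mulCoordCLM d i ψ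

noncomputable def cSch {d : ℕ} (i : Fin d) (ψ : SchwartzMap (EuclideanSpace ℝ (Fin d)) ℝ) :
    SchwartzMap (EuclideanSpace ℝ (Fin d)) ℝ :=
  mulCoordCLM d i ψ - (LineDeriv.lineDerivOp (ed d i) ψ : SchwartzMap (EuclideanSpace ℝ (Fin d)) ℝ)

noncomputable def NSch {d : ℕ} (ψ : SchwartzMap (EuclideanSpace ℝ (Fin d)) ℝ) :
    SchwartzMap (EuclideanSpace ℝ (Fin d)) ℝ :=
  (d : ℝ) • ψ + (2 : ℝ) • ∑ i, cSch i (aSch i ψ)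

lemma aSch_apply (i : Fin d) (ψ : SchwartzMap (EuclideanSpace ℝ (Fin d)) ℝ) (x) :
    aSch i ψ x = fderiv ℝ (⇑ψ) x (ed d i) + 2⁻¹ * x i * ψ x := by
  rw [aSch, SchwartzMap.add_apply, SchwartzMap.lineDerivOp_apply_eq_fderiv, mulCoordCLM_apply]

lemma cSch_apply (i : Fin d) (ψ : SchwartzMap (EuclideanSpace ℝ (Fin d)) ℝ) (x) :
    cSch i ψ x = -(fderiv ℝ (⇑ψ) x (ed d i)) + 2⁻¹ * x i * ψ x := by
  rw [cSch, SchwartzMap.sub_apply, SchwartzMap.lineDerivOp_apply_eq_fderiv, mulCoordCLM_apply]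
  ring

/-- `hermCoeff` of a Schwartz function, in terms of `Hb`. -/
lemma Hb_integrable (β : Fin d → ℕ) : Integrable (Hb β) := PiP_integrable (Pf β)

lemma hermCoeff_eq (f : EuclideanSpace ℝ (Fin d) → ℝ) (β : Fin d → ℕ) :
    hermCoeff d f β = ∫ x, f x * Hb β x := by
  rw [hermCoeff]
  congr 1
  funext x
  rw [hb_eq]
  rfl

lemma hermCoeff_aSch (ψ : SchwartzMap (EuclideanSpace ℝ (Fin d)) ℝ) (i : Fin d)
    (β : Fin d → ℕ) :
    hermCoeff d (⇑(aSch i ψ)) β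
      = Real.sqrt (β i + 1) * hermCoeff d (⇑ψ) (Function.update β i (β i + 1)) := by
  rw [hermCoeff_eq, hermCoeff_eq]
  have h1 : (fun x => aSch i ψ x * Hb β x)
      = fun x => (fderiv ℝ (⇑ψ) x (ed d i) + 2⁻¹ * x i * ψ x) * PiP (Pf β) x := by
    funext x; rw [aSch_apply]; rfl
  rw [h1, adj_lower ψ (Pf β) i]
  have h2 : (fun x => ψ x * (-(fderiv ℝ (PiP (Pf β)) x (ed d i)) + 2⁻¹ * x i * PiP (Pf β) x))
      = fun x => Real.sqrt (β i + 1) *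
          (ψ x * Hb (Function.update β i (β i + 1)) x) := by
    funext x; rw [raise_pt β i x]; show _ = _ * (_ * PiP (Pf _) x); ring
  rw [h2, integral_const_mul]

lemma hermCoeff_cSch (ψ : SchwartzMap (EuclideanSpace ℝ (Fin d)) ℝ) (i : Fin d)
    (β : Fin d → ℕ) :
    hermCoeff d (⇑(cSch i ψ)) β
      = Real.sqrt (β i) * hermCoeff d (⇑ψ) (Function.update β i (β i - 1)) := by
  rw [hermCoeff_eq, hermCoeff_eq]
  have h1 : (fun x => cSch i ψ x * Hb β x)
      = fun x => (-(fderiv ℝ (⇑ψ) x (ed d i)) + 2⁻¹ * x i * ψ x) * PiP (Pf β) x := by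
    funext x; rw [cSch_apply]; rfl
  rw [h1, adj_raise ψ (Pf β) i]
  have h2 : (fun x => ψ x * (fderiv ℝ (PiP (Pf β)) x (ed d i) + 2⁻¹ * x i * PiP (Pf β) x))
      = fun x => Real.sqrt (β i) *
          (ψ x * Hb (Function.update β i (β i - 1)) x) := by
    funext x; rw [lower_pt β i x]; show _ = _ * (_ * PiP (Pf _) x); ring
  rw [h2, integral_const_mul]

lemma hermCoeff_add (f g : SchwartzMap (EuclideanSpace ℝ (Fin d)) ℝ) (β : Fin d → ℕ) :
    hermCoeff d (⇑(f + g)) β = hermCoeff d (⇑f) β + hermCoeff d (⇑g) β := by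
  rw [hermCoeff_eq, hermCoeff_eq, hermCoeff_eq]
  have h1 : (fun x => (f + g) x * Hb β x) = fun x => f x * Hb β x + g x * Hb β x := by
    funext x; rw [SchwartzMap.add_apply]; ring
  rw [h1, integral_add (schwartz_mul_integrable f (Hb_integrable β))
    (schwartz_mul_integrable g (Hb_integrable β))]

lemma hermCoeff_smul (c : ℝ) (f : SchwartzMap (EuclideanSpace ℝ (Fin d)) ℝ) (β : Fin d → ℕ) :
    hermCoeff d (⇑(c • f)) β = c * hermCoeff d (⇑f) β := by
  rw [hermCoeff_eq, hermCoeff_eq]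
  have h1 : (fun x => (c • f) x * Hb β x) = fun x => c * (f x * Hb β x) := by
    funext x; rw [SchwartzMap.smul_apply]; simp [smul_eq_mul]; ring
  rw [h1, integral_const_mul]

lemma hermCoeff_sum {ι : Type*} (s : Finset ι)
    (f : ι → SchwartzMap (EuclideanSpace ℝ (Fin d)) ℝ) (β : Fin d → ℕ) :
    hermCoeff d (⇑(∑ i ∈ s, f i)) β = ∑ i ∈ s, hermCoeff d (⇑(f i)) β := by
  induction s using Finset.cons_induction with
  | empty =>
      rw [Finset.sum_empty, Finset.sum_empty, hermCoeff_eq]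
      simp
  | cons a s ha ih =>
      rw [Finset.sum_cons, Finset.sum_cons, hermCoeff_add, ih]

/-- the key eigen-relation. -/
lemma hermCoeff_NSch (ψ : SchwartzMap (EuclideanSpace ℝ (Fin d)) ℝ) (β : Fin d → ℕ) :
    hermCoeff d (⇑(NSch ψ)) β = ((2 * ∑ i, β i + d : ℕ) : ℝ) * hermCoeff d (⇑ψ) β := by
  have hterm : ∀ i : Fin d, hermCoeff d (⇑(cSch i (aSch i ψ))) β
      = (β i : ℝ) * hermCoeff d (⇑ψ) β := by
    intro i
    rw [hermCoeff_cSch, hermCoeff_aSch]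
    rcases Nat.eq_zero_or_pos (β i) with h0 | hpos
    · rw [h0]
      simp
    · have h1 : Function.update β i (β i - 1) i + 1 = β i := by
        rw [Function.update_self]; omega
      have h2 : Function.update (Function.update β i (β i - 1)) i
          (Function.update β i (β i - 1) i + 1) = β := by
        funext j
        rcases eq_or_ne j i with rfl | h
        · rw [Function.update_self, h1]
        · simp [Function.update_of_ne h]
      rw [show ((Function.update β i (β i - 1) i : ℝ) + 1) = ((β i : ℝ)) by
        exact_mod_cast congrArg Nat.cast h1]
      rw [h2, ← mul_assoc, Real.mul_self_sqrt (by positivity : (0:ℝ) ≤ (β i : ℝ))]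
  rw [NSch, hermCoeff_add, hermCoeff_smul, hermCoeff_smul, hermCoeff_sum,
    Finset.sum_congr rfl (fun i _ => hterm i), ← Finset.sum_mul]
  push_cast
  ring

lemma Hb_continuous {d : ℕ} (β : Fin d → ℕ) : Continuous (Hb β) := PiP_continuous (Pf β)

lemma Hb_sq_integrable {d : ℕ} (β : Fin d → ℕ) : Integrable (fun x => Hb β x * Hb β x) :=
  PiP_mul_integrable (Pf β) (Pf β)

local notation "⟪" x ", " y "⟫" => @inner ℝ _ _ x y

lemma Hb_memℒp (β : Fin d → ℕ) :
    MemLp (Hb β) 2 (volume : Measure (EuclideanSpace ℝ (Fin d))) := by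
  refine (memLp_two_iff_integrable_sq (Hb_continuous β).aestronglyMeasurable).2 ?_
  have := Hb_sq_integrable β
  simpa [pow_two] using this

noncomputable def eHb (β : Fin d → ℕ) :
    Lp ℝ 2 (volume : Measure (EuclideanSpace ℝ (Fin d))) := (Hb_memℒp β).toLp (Hb β)

lemma inner_toLp {f g : EuclideanSpace ℝ (Fin d) → ℝ}
    (hf : MemLp f 2 (volume : Measure (EuclideanSpace ℝ (Fin d)))) (hg : MemLp g 2 volume) :
    ⟪hf.toLp f, hg.toLp g⟫ = ∫ x, f x * g x := by
  rw [MeasureTheory.L2.inner_def]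
  apply integral_congr_ae
  filter_upwards [hf.coeFn_toLp, hg.coeFn_toLp] with a ha hb
  rw [ha, hb]
  simp [RCLike.inner_apply, starRingEnd_apply, star_trivial, mul_comm]

lemma eHb_orthonormal : Orthonormal ℝ (fun β : Fin d → ℕ => eHb β) := by
  rw [orthonormal_iff_ite]
  intro α β
  rw [eHb, eHb, inner_toLp (Hb_memℒp α) (Hb_memℒp β)]
  exact ortho (∑ i, α i) α β rfl

lemma schwartz_memℒp2 (χ : SchwartzMap (EuclideanSpace ℝ (Fin d)) ℝ) :
    MemLp (⇑χ) 2 (volume : Measure (EuclideanSpace ℝ (Fin d))) := by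
  refine (memLp_two_iff_integrable_sq χ.continuous.aestronglyMeasurable).2 ?_
  have := schwartz_mul_integrable χ χ.integrable
  simpa [pow_two] using this

lemma iterate_coeff (φ : SchwartzMap (EuclideanSpace ℝ (Fin d)) ℝ) :
    ∀ (n : ℕ) (β : Fin d → ℕ), hermCoeff d (⇑(NSch^[n] φ)) β
      = (((2 * ∑ i, β i) + d : ℕ) : ℝ) ^ n * hermCoeff d (⇑φ) β := by
  intro n
  induction n with
  | zero => intro β; simp
  | succ n ih =>
      intro β
      rw [Function.iterate_succ_apply', hermCoeff_NSch, ih, pow_succ]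
      ring

end HermAux

open HermAux

/-- The Hermite coefficients of a Schwartz function are rapidly decreasing:
for every `n`, `Σ_β (2|β|+d)^{2n} (∫ φ h_β)² < ∞`. -/
theorem schwartz_hermite_coeff_rapidly_decreasing (d : ℕ)
    (φ : SchwartzMap (EuclideanSpace ℝ (Fin d)) ℝ) (n : ℕ) :
    Summable (fun β : Fin d → ℕ =>
      (((2 * ∑ i, β i) + d : ℕ) : ℝ) ^ (2 * n) *
        hermCoeff d (fun z => φ z) β ^ 2) := by
  classical
  set ψn := NSch^[n] φ with hψn
  have hmem := schwartz_memℒp2 ψn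
  have hsum := (eHb_orthonormal (d := d)).inner_products_summable
    (x := hmem.toLp (⇑ψn))
  refine hsum.congr ?_
  intro β
  have h1 : @inner ℝ _ _ (eHb β) (hmem.toLp (⇑ψn)) = hermCoeff d (⇑ψn) β := by
    rw [eHb, inner_toLp (Hb_memℒp β) hmem, hermCoeff_eq]
    congr 1
    funext x
    ring
  rw [h1, iterate_coeff φ n β]
  rw [Real.norm_eq_abs, sq_abs]
  rw [mul_pow, ← pow_mul]
  ring_nf
end

section
/- Let f be in the Schwartz space S(ℝ^d) and for t ∈ (0, ∞) and x ∈ ℝ^d define u(t, x) := ∫_{ℝ^d} f(x + y) (2πt)^{−d/2} e^{−|y|²/(2t)} dy, with u(0, x) := f(x). Then for each t > 0 the function u(t, ·) is a Schwartz function, u is differentiable in t on (0, ∞) with ∂_t u(t, x) = (1/2) Δ u(t, x) for all t > 0 and x ∈ ℝ^d (where Δ is the Laplacian in x), and u(t, x) → f(x) as t → 0⁺ for every x ∈ ℝ^d. (This is the representative-level solution u(t,·) = 𝔼(τ_{B_t} f) of the heat Cauchy problem u_t = (1/2)Δu, u_0 = f.) -/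
open MeasureTheory

noncomputable def pderiv1 (d : ℕ) (i : Fin d) (f : EuclideanSpace ℝ (Fin d) → ℝ) :
    EuclideanSpace ℝ (Fin d) → ℝ :=
  fun x => fderiv ℝ f x (EuclideanSpace.single i 1)

noncomputable def multiDeriv (d : ℕ) (β : Fin d → ℕ) (f : EuclideanSpace ℝ (Fin d) → ℝ) :
    EuclideanSpace ℝ (Fin d) → ℝ :=
  (List.finRange d).foldr (fun i g => (pderiv1 d i)^[β i] g) f

open Filter
set_option maxHeartbeats 1000000
set_option synthInstance.maxHeartbeats 100000

namespace HeatPf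

abbrev E1 (d : ℕ) : Type := EuclideanSpace ℝ (Fin d)




lemma exp_bound_aux {a r : ℝ} (ha : 0 < a) (hr : 0 ≤ r) :
    (1 + r) * Real.exp (-(a * r ^ 2)) ≤ 2 + 1 / a := by
  have h2 : 1 + a * r ^ 2 ≤ Real.exp (a * r ^ 2) := by
    have := Real.add_one_le_exp (a * r ^ 2); linarith
  have hpos : (0:ℝ) < 1 + a * r ^ 2 := by positivity
  have h1 : Real.exp (-(a * r ^ 2)) ≤ 1 / (1 + a * r ^ 2) := by
    rw [Real.exp_neg]
    rw [one_div]
    exact inv_anti₀ hpos h2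
  calc (1 + r) * Real.exp (-(a * r ^ 2)) ≤ (1 + r) * (1 / (1 + a * r ^ 2)) := by
        apply mul_le_mul_of_nonneg_left h1 (by linarith)
    _ ≤ 2 + 1 / a := by
        rw [mul_one_div, div_le_iff₀ hpos]
        have hfe : (1 / a) * (a * r ^ 2) = r ^ 2 := by field_simp
        have h1a : 0 < 1 / a := by positivity
        nlinarith [sq_nonneg (r - 1), hfe, h1a, mul_nonneg ha.le (sq_nonneg r)]

lemma poly_gauss_bound {b : ℝ} (hb : 0 < b) (k : ℕ) {r : ℝ} (hr : 0 ≤ r) :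
    (1 + r) ^ k * Real.exp (-(b * r ^ 2)) ≤
      (2 + 2 * k / b) ^ k * Real.exp (-(b / 2 * r ^ 2)) := by
  have key : (1 + r) ^ k * Real.exp (-(b / 2 * r ^ 2)) ≤ (2 + 2 * k / b) ^ k := by
    rcases Nat.eq_zero_or_pos k with hk | hk
    · subst hk
      simp only [pow_zero, one_mul]
      exact Real.exp_le_one_iff.2 (by nlinarith [sq_nonneg r])
    · have hk' : (0:ℝ) < k := by exact_mod_cast hk
      have hexp : Real.exp (-(b / 2 * r ^ 2)) = Real.exp (-(b / (2 * k) * r ^ 2)) ^ k := by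
        rw [← Real.exp_nat_mul]; congr 1; field_simp
      rw [hexp, ← mul_pow]
      apply pow_le_pow_left₀ (by positivity)
      have := exp_bound_aux (a := b / (2 * k)) (by positivity) hr
      calc (1 + r) * Real.exp (-(b / (2 * k) * r ^ 2)) ≤ 2 + 1 / (b / (2 * k)) := this
        _ = 2 + 2 * k / b := by rw [one_div_div]
  calc (1 + r) ^ k * Real.exp (-(b * r ^ 2))
      = ((1 + r) ^ k * Real.exp (-(b / 2 * r ^ 2))) * Real.exp (-(b / 2 * r ^ 2)) := by
        rw [mul_assoc, ← Real.exp_add]; congr 2; ring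
    _ ≤ (2 + 2 * k / b) ^ k * Real.exp (-(b / 2 * r ^ 2)) := by
        apply mul_le_mul_of_nonneg_right key (Real.exp_nonneg _)

lemma integrable_gauss {d : ℕ} {b : ℝ} (hb : 0 < b) :
    Integrable (fun y : E1 d => Real.exp (-(b * ‖y‖ ^ 2))) := by
  have h := (GaussianFourier.integrable_cexp_neg_mul_sq_norm_add (V := E1 d)
    (b := (b:ℂ)) (by simpa using hb) 0 0).norm
  apply h.congr
  filter_upwards with y
  rw [Complex.norm_exp]
  have h2 : (-(b:ℂ) * (‖y‖:ℂ) ^ 2 + 0 * ((inner ℝ 0 y : ℝ) : ℂ)) = ((-(b * ‖y‖ ^ 2) : ℝ) : ℂ) := by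
    push_cast; ring
  rw [h2, Complex.ofReal_re]

lemma integrable_poly_gauss {d : ℕ} {b : ℝ} (hb : 0 < b) (k : ℕ) :
    Integrable (fun y : E1 d => (1 + ‖y‖) ^ k * Real.exp (-(b * ‖y‖ ^ 2))) := by
  have hg : Integrable (fun y : E1 d =>
      (2 + 2 * k / b) ^ k * Real.exp (-(b / 2 * ‖y‖ ^ 2))) :=
    (integrable_gauss (by positivity)).const_mul _
  apply hg.mono'
  · apply Continuous.aestronglyMeasurable
    exact ((continuous_const.add continuous_norm).pow k).mul
      ((continuous_const.mul (continuous_norm.pow 2)).neg.rexp)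
  · filter_upwards with y
    rw [Real.norm_of_nonneg (by positivity)]
    exact poly_gauss_bound hb k (norm_nonneg y)


section Conv

variable {d : ℕ} {F : Type} [NormedAddCommGroup F] [NormedSpace ℝ F]

def Tame (g : E1 d → F) : Prop :=
  ContDiff ℝ ((⊤ : ℕ∞) : WithTop ℕ∞) g ∧
    ∀ n : ℕ, ∃ C : ℝ, ∀ x, ‖iteratedFDeriv ℝ n g x‖ ≤ C

lemma one_le_ic : (1 : WithTop ℕ∞) ≤ ((⊤ : ℕ∞) : WithTop ℕ∞) := by
  exact_mod_cast (le_top : (1:ℕ∞) ≤ ⊤)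

lemma Tame.contDiff {g : E1 d → F} (hg : Tame g) : ContDiff ℝ ((⊤ : ℕ∞) : WithTop ℕ∞) g := hg.1

lemma Tame.continuous {g : E1 d → F} (hg : Tame g) : Continuous g := hg.1.continuous

lemma Tame.bound0 {g : E1 d → F} (hg : Tame g) : ∃ C : ℝ, ∀ x, ‖g x‖ ≤ C := by
  obtain ⟨C, hC⟩ := hg.2 0
  exact ⟨C, fun x => by simpa using hC x⟩

lemma Tame.differentiable {g : E1 d → F} (hg : Tame g) : Differentiable ℝ g :=
  hg.1.differentiable (by simp)

lemma Tame.fderiv {g : E1 d → F} (hg : Tame g) : Tame (fderiv ℝ g) := by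
  constructor
  · exact hg.1.fderiv_right (by exact_mod_cast (le_top : ((⊤:ℕ∞)+1 : ℕ∞) ≤ ⊤))
  · intro n
    obtain ⟨C, hC⟩ := hg.2 (n + 1)
    exact ⟨C, fun x => by rw [norm_iteratedFDeriv_fderiv]; exact hC x⟩

variable {ρ : E1 d → ℝ}

lemma integrable_smul_comp (hρc : Continuous ρ)
    (hρ0 : Integrable (fun y : E1 d => |ρ y|)) {g : E1 d → F} (hgc : Continuous g)
    {C : ℝ} (hgb : ∀ z, ‖g z‖ ≤ C) (x : E1 d) :
    Integrable (fun y => ρ y • g (x + y)) := by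
  apply (hρ0.mul_const C).mono'
  · exact (hρc.smul (hgc.comp (continuous_const.add continuous_id))).aestronglyMeasurable
  · filter_upwards with y
    rw [norm_smul, Real.norm_eq_abs]
    exact mul_le_mul_of_nonneg_left (hgb _) (abs_nonneg _)

lemma conv_hasFDerivAt [FiniteDimensional ℝ F] (hρc : Continuous ρ)
    (hρ0 : Integrable (fun y : E1 d => |ρ y|)) {g : E1 d → F} (hg : Tame g) (x : E1 d) :
    HasFDerivAt (fun x' => ∫ y, ρ y • g (x' + y))
      (∫ y, ρ y • _root_.fderiv ℝ g (x + y)) x := by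
  obtain ⟨C0, hC0⟩ := hg.bound0
  obtain ⟨C1, hC1⟩ := hg.fderiv.bound0
  have hdg : Continuous (_root_.fderiv ℝ g) := hg.fderiv.continuous
  apply hasFDerivAt_integral_of_dominated_of_fderiv_le
    (F' := fun x' y => ρ y • _root_.fderiv ℝ g (x' + y))
    (bound := fun y => |ρ y| * C1) (hs := Metric.ball_mem_nhds _ one_pos)
  · filter_upwards with x'
    exact (hρc.smul (hg.continuous.comp (continuous_const.add continuous_id))).aestronglyMeasurable
  · exact integrable_smul_comp hρc hρ0 hg.continuous hC0 x
  · exact (hρc.smul (hdg.comp (continuous_const.add continuous_id))).aestronglyMeasurable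
  · filter_upwards with y x' _
    refine le_trans (ContinuousLinearMap.opNorm_smul_le _ _) ?_
    rw [Real.norm_eq_abs]
    exact mul_le_mul_of_nonneg_left (hC1 _) (abs_nonneg _)
  · exact hρ0.mul_const C1
  · filter_upwards with y x' _
    have h1 : HasFDerivAt (fun x'' => g (x'' + y)) (_root_.fderiv ℝ g (x' + y)) x' := by
      have h2 := (hg.differentiable (x' + y)).hasFDerivAt
      have h3 := h2.comp x' ((hasFDerivAt_id x').add_const y)
      exact h3
    exact h1.const_smul (ρ y)

lemma conv_contDiff (hρc : Continuous ρ)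
    (hρ0 : Integrable (fun y : E1 d => |ρ y|)) :
    ∀ (n : ℕ) (F : Type) (_ : NormedAddCommGroup F) (_ : NormedSpace ℝ F)
      (_ : FiniteDimensional ℝ F) (g : E1 d → F) (_ : Tame g),
      ContDiff ℝ (n : WithTop ℕ∞) (fun x => ∫ y, ρ y • g (x + y)) := by
  intro n
  induction n with
  | zero =>
    intro F _ _ _ g hg
    rw [Nat.cast_zero, contDiff_zero]
    have hd : Differentiable ℝ (fun x => ∫ y, ρ y • g (x + y)) :=
      fun x => (conv_hasFDerivAt hρc hρ0 hg x).differentiableAt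
    exact hd.continuous
  | succ n ih =>
    intro F _ _ _ g hg
    rw [show ((n + 1 : ℕ) : WithTop ℕ∞) = (n : WithTop ℕ∞) + 1 by push_cast; rfl]
    rw [contDiff_succ_iff_fderiv]
    refine ⟨fun x => (conv_hasFDerivAt hρc hρ0 hg x).differentiableAt, ?_, ?_⟩
    · intro h; exact absurd h (by simp)
    · have heq : _root_.fderiv ℝ (fun x => ∫ y, ρ y • g (x + y)) =
          fun x => ∫ y, ρ y • _root_.fderiv ℝ g (x + y) :=
        funext fun x => (conv_hasFDerivAt hρc hρ0 hg x).fderiv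
      rw [heq]
      exact ih (E1 d →L[ℝ] F) inferInstance inferInstance inferInstance _ hg.fderiv


lemma Tame.iter_cont {g : E1 d → F} (hg : Tame g) (n : ℕ) :
    Continuous (iteratedFDeriv ℝ n g) :=
  hg.1.continuous_iteratedFDeriv (by exact_mod_cast (le_top : (n:ℕ∞) ≤ ⊤))

lemma conv_iteratedFDeriv (hρc : Continuous ρ)
    (hρ0 : Integrable (fun y : E1 d => |ρ y|)) :
    ∀ (n : ℕ) (F : Type) (_ : NormedAddCommGroup F) (_ : NormedSpace ℝ F)
      (_ : FiniteDimensional ℝ F) (g : E1 d → F) (_ : Tame g) (x : E1 d),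
      iteratedFDeriv ℝ n (fun x' => ∫ y, ρ y • g (x' + y)) x
        = ∫ y, ρ y • iteratedFDeriv ℝ n g (x + y) := by
  intro n
  induction n with
  | zero =>
    intro F _ _ _ g hg x
    obtain ⟨C0, hC0⟩ := hg.bound0
    have hint : Integrable (fun y => ρ y • g (x + y)) :=
      integrable_smul_comp hρc hρ0 hg.continuous hC0 x
    rw [iteratedFDeriv_zero_eq_comp]
    have h2 : (fun y => ρ y • iteratedFDeriv ℝ 0 g (x + y)) =
        fun y => (continuousMultilinearCurryFin0 ℝ (E1 d) F).symm
          (ρ y • g (x + y)) := by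
      funext y
      rw [iteratedFDeriv_zero_eq_comp]
      simp
    have hcomm := (continuousMultilinearCurryFin0 ℝ (E1 d)
      F).symm.toLinearIsometry.integral_comp_comm (μ := volume)
      (fun y => ρ y • g (x + y))
    simp only [LinearIsometryEquiv.coe_toLinearIsometry] at hcomm
    rw [h2, hcomm]
    rfl
  | succ n ih =>
    intro F _ _ _ g hg x
    have heq : _root_.fderiv ℝ (fun x' => ∫ y, ρ y • g (x' + y)) =
        fun x' => ∫ y, ρ y • _root_.fderiv ℝ g (x' + y) :=
      funext fun x' => (conv_hasFDerivAt hρc hρ0 hg x').fderiv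
    obtain ⟨C, hC⟩ := hg.fderiv.2 n
    have hint : Integrable
        (fun y => ρ y • iteratedFDeriv ℝ n (_root_.fderiv ℝ g) (x + y)) :=
      integrable_smul_comp hρc hρ0 (hg.fderiv.iter_cont n) hC x
    rw [iteratedFDeriv_succ_eq_comp_right]
    simp only [Function.comp_apply]
    rw [show (fun y => _root_.fderiv ℝ (fun x' => ∫ y, ρ y • g (x' + y)) y) =
      (fun x' => ∫ y, ρ y • _root_.fderiv ℝ g (x' + y)) from heq]
    rw [ih (E1 d →L[ℝ] F) inferInstance inferInstance inferInstance _ hg.fderiv x]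
    have hcomm := (continuousMultilinearCurryRightEquiv' ℝ n (E1 d)
      F).symm.toLinearIsometry.integral_comp_comm (μ := volume)
      (fun y => ρ y • iteratedFDeriv ℝ n (_root_.fderiv ℝ g) (x + y))
    simp only [LinearIsometryEquiv.coe_toLinearIsometry] at hcomm
    rw [← hcomm]
    congr 1
    funext y
    rw [iteratedFDeriv_succ_eq_comp_right]
    simp


lemma schwartz_tame (f : SchwartzMap (E1 d) ℝ) : Tame (⇑f) := by
  refine ⟨f.smooth ⊤, fun n => ?_⟩
  obtain ⟨C, -, hC⟩ := f.decay 0 n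
  exact ⟨C, fun x => by simpa using hC x⟩

lemma norm_le_aux (x y : E1 d) : ‖x‖ ≤ (1 + ‖x + y‖) * (1 + ‖y‖) := by
  have h1 : ‖x‖ ≤ ‖x + y‖ + ‖y‖ := by
    calc ‖x‖ = ‖x + y + -y‖ := by rw [add_neg_cancel_right]
      _ ≤ ‖x + y‖ + ‖-y‖ := norm_add_le _ _
      _ = ‖x + y‖ + ‖y‖ := by rw [norm_neg]
  nlinarith [norm_nonneg (x + y), norm_nonneg y, norm_nonneg x]

lemma conv_decay (hρc : Continuous ρ)
    (hρm : ∀ k : ℕ, Integrable (fun y : E1 d => (1 + ‖y‖) ^ k * |ρ y|))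
    (f : SchwartzMap (E1 d) ℝ) (k n : ℕ) :
    ∃ C : ℝ, ∀ x, ‖x‖ ^ k *
      ‖iteratedFDeriv ℝ n (fun x' => ∫ y, ρ y • f (x' + y)) x‖ ≤ C := by
  have hρ0 : Integrable (fun y : E1 d => |ρ y|) := by
    simpa using hρm 0
  set S : ℝ := 2 ^ k *
    ((Finset.Iic (k, n)).sup (schwartzSeminormFamily ℝ (E1 d) ℝ)) f with hS
  have hSnn : 0 ≤ S := by
    apply mul_nonneg (by positivity)
    exact apply_nonneg _ _
  refine ⟨(∫ y, (1 + ‖y‖) ^ k * |ρ y|) * S, fun x => ?_⟩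
  rw [conv_iteratedFDeriv hρc hρ0 n ℝ inferInstance inferInstance inferInstance
    (⇑f) (schwartz_tame f) x]
  obtain ⟨Cn, hCn⟩ := (schwartz_tame f).2 n
  have hint : Integrable (fun y => ρ y • iteratedFDeriv ℝ n (⇑f) (x + y)) :=
    integrable_smul_comp hρc hρ0 ((schwartz_tame f).iter_cont n) hCn x
  calc ‖x‖ ^ k * ‖∫ y, ρ y • iteratedFDeriv ℝ n (⇑f) (x + y)‖
      ≤ ‖x‖ ^ k * ∫ y, ‖ρ y • iteratedFDeriv ℝ n (⇑f) (x + y)‖ := by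
        apply mul_le_mul_of_nonneg_left (norm_integral_le_integral_norm _) (by positivity)
    _ = ∫ y, ‖x‖ ^ k * ‖ρ y • iteratedFDeriv ℝ n (⇑f) (x + y)‖ := by
        rw [MeasureTheory.integral_const_mul]
    _ ≤ ∫ y, (1 + ‖y‖) ^ k * |ρ y| * S := by
        apply integral_mono (hint.norm.const_mul _) ((hρm k).mul_const S)
        intro y
        simp only
        rw [norm_smul, Real.norm_eq_abs]
        have h1 : ‖x‖ ^ k ≤ (1 + ‖x + y‖) ^ k * (1 + ‖y‖) ^ k := by
          rw [← mul_pow]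
          exact pow_le_pow_left₀ (norm_nonneg x) (norm_le_aux x y) k
        have h2 : (1 + ‖x + y‖) ^ k * ‖iteratedFDeriv ℝ n (⇑f) (x + y)‖ ≤ S :=
          f.one_add_le_sup_seminorm_apply (m := (k, n)) le_rfl le_rfl (x + y)
        calc ‖x‖ ^ k * (|ρ y| * ‖iteratedFDeriv ℝ n (⇑f) (x + y)‖)
            ≤ (1 + ‖x + y‖) ^ k * (1 + ‖y‖) ^ k *
              (|ρ y| * ‖iteratedFDeriv ℝ n (⇑f) (x + y)‖) := by
              apply mul_le_mul_of_nonneg_right h1 (by positivity)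
          _ = (1 + ‖y‖) ^ k * |ρ y| *
              ((1 + ‖x + y‖) ^ k * ‖iteratedFDeriv ℝ n (⇑f) (x + y)‖) := by ring
          _ ≤ (1 + ‖y‖) ^ k * |ρ y| * S := by
              apply mul_le_mul_of_nonneg_left h2 (by positivity)
    _ = (∫ y, (1 + ‖y‖) ^ k * |ρ y|) * S := by rw [MeasureTheory.integral_mul_const]

noncomputable def convSchwartz (hρc : Continuous ρ)
    (hρm : ∀ k : ℕ, Integrable (fun y : E1 d => (1 + ‖y‖) ^ k * |ρ y|))
    (f : SchwartzMap (E1 d) ℝ) : SchwartzMap (E1 d) ℝ where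
  toFun := fun x => ∫ y, ρ y • f (x + y)
  smooth' := by
    have hρ0 : Integrable (fun y : E1 d => |ρ y|) := by simpa using hρm 0
    rw [show ((⊤ : ℕ∞) : WithTop ℕ∞) = ((⊤ : ℕ∞) : WithTop ℕ∞) from rfl]
    apply contDiff_infty.mpr
    intro n
    exact conv_contDiff hρc hρ0 n ℝ inferInstance inferInstance inferInstance
      (⇑f) (schwartz_tame f)
  decay' := conv_decay hρc hρm f

end Conv

section Kernel

variable {d : ℕ}

noncomputable def Kt (d : ℕ) (t : ℝ) (y : E1 d) : ℝ :=
  (2 * Real.pi * t) ^ (-(d : ℝ) / 2) * Real.exp (-‖y‖ ^ 2 / (2 * t))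

lemma Kt_cont {t : ℝ} : Continuous (Kt d t) :=
  continuous_const.mul (((continuous_norm.pow 2).neg.div_const (2 * t)).rexp)

lemma Kt_nonneg {t : ℝ} (ht : 0 < t) (y : E1 d) : 0 ≤ Kt d t y := by
  apply mul_nonneg (Real.rpow_nonneg (by positivity) _) (Real.exp_nonneg _)

lemma exp_arg_eq {t : ℝ} (ht : 0 < t) (y : E1 d) :
    -‖y‖ ^ 2 / (2 * t) = -(1 / (2 * t) * ‖y‖ ^ 2) := by
  field_simp

lemma Kt_moment {t : ℝ} (ht : 0 < t) (k : ℕ) :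
    Integrable (fun y : E1 d => (1 + ‖y‖) ^ k * |Kt d t y|) := by
  have h := (integrable_poly_gauss (d := d) (b := 1 / (2 * t)) (by positivity) k).const_mul
    ((2 * Real.pi * t) ^ (-(d : ℝ) / 2))
  apply h.congr
  filter_upwards with y
  rw [abs_of_nonneg (Kt_nonneg ht y)]
  unfold Kt
  rw [exp_arg_eq ht]
  ring

end Kernel

section Subst

variable {d : ℕ}

lemma sqrt_pow_mul_const {t : ℝ} (ht : 0 < t) :
    Real.sqrt t ^ d * (2 * Real.pi * t) ^ (-(d : ℝ) / 2) =
      (2 * Real.pi) ^ (-(d : ℝ) / 2) := by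
  have h2pi : (0:ℝ) < 2 * Real.pi := by positivity
  rw [Real.mul_rpow h2pi.le ht.le]
  have h1 : Real.sqrt t ^ d = t ^ ((d : ℝ) / 2) := by
    rw [Real.sqrt_eq_rpow, ← Real.rpow_natCast (t ^ ((1:ℝ)/2)) d, ← Real.rpow_mul ht.le]
    congr 1; ring
  rw [h1, mul_comm ((2 * Real.pi) ^ (-(d:ℝ)/2)) _]
  have h2 : t ^ ((d:ℝ)/2) * t ^ (-(d:ℝ)/2) = 1 := by
    rw [← Real.rpow_add ht, show (d:ℝ)/2 + -(d:ℝ)/2 = 0 by ring, Real.rpow_zero]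
  calc t ^ ((d:ℝ)/2) * (t ^ (-(d:ℝ)/2) * (2*Real.pi) ^ (-(d:ℝ)/2))
      = (t ^ ((d:ℝ)/2) * t ^ (-(d:ℝ)/2)) * (2*Real.pi) ^ (-(d:ℝ)/2) := by ring
    _ = (2*Real.pi) ^ (-(d:ℝ)/2) := by rw [h2, one_mul]

lemma u_subst (f : SchwartzMap (E1 d) ℝ) {t : ℝ} (ht : 0 < t) (x : E1 d) :
    ∫ y : E1 d, f (x + y) *
        ((2 * Real.pi * t) ^ (-(d : ℝ) / 2) * Real.exp (-‖y‖ ^ 2 / (2 * t))) =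
      (2 * Real.pi) ^ (-(d : ℝ) / 2) *
        ∫ z : E1 d, f (x + Real.sqrt t • z) * Real.exp (-‖z‖ ^ 2 / 2) := by
  set h : E1 d → ℝ := fun y => f (x + y) *
    ((2 * Real.pi * t) ^ (-(d : ℝ) / 2) * Real.exp (-‖y‖ ^ 2 / (2 * t))) with hh
  have hst : (0:ℝ) < Real.sqrt t := Real.sqrt_pos.2 ht
  have hcv := MeasureTheory.Measure.integral_comp_smul (volume : Measure (E1 d)) h (Real.sqrt t)
  rw [finrank_euclideanSpace_fin] at hcv
  have habs : |((Real.sqrt t ^ d)⁻¹ : ℝ)| = (Real.sqrt t ^ d)⁻¹ := by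
    rw [abs_of_pos]; positivity
  rw [habs, smul_eq_mul] at hcv
  have key : ∫ y, h y = Real.sqrt t ^ d * ∫ z, h (Real.sqrt t • z) := by
    rw [hcv, ← mul_assoc, mul_inv_cancel₀ (by positivity), one_mul]
  rw [key]
  have hval : ∀ z : E1 d, h (Real.sqrt t • z) =
      (2 * Real.pi * t) ^ (-(d : ℝ) / 2) *
        (f (x + Real.sqrt t • z) * Real.exp (-‖z‖ ^ 2 / 2)) := by
    intro z
    rw [hh]
    simp only
    have hnorm : ‖Real.sqrt t • z‖ ^ 2 = t * ‖z‖ ^ 2 := by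
      rw [norm_smul, Real.norm_eq_abs, abs_of_pos hst, mul_pow, Real.sq_sqrt ht.le]
    rw [hnorm]
    have harg : -(t * ‖z‖ ^ 2) / (2 * t) = -‖z‖ ^ 2 / 2 := by
      field_simp
    rw [harg]; ring
  calc Real.sqrt t ^ d * ∫ z, h (Real.sqrt t • z)
      = Real.sqrt t ^ d * ((2 * Real.pi * t) ^ (-(d : ℝ) / 2) *
          ∫ z, f (x + Real.sqrt t • z) * Real.exp (-‖z‖ ^ 2 / 2)) := by
        congr 1
        rw [show (fun z => h (Real.sqrt t • z)) = fun z =>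
          (2 * Real.pi * t) ^ (-(d : ℝ) / 2) *
            (f (x + Real.sqrt t • z) * Real.exp (-‖z‖ ^ 2 / 2)) from funext hval]
        rw [MeasureTheory.integral_const_mul]
    _ = (2 * Real.pi) ^ (-(d : ℝ) / 2) *
          ∫ z, f (x + Real.sqrt t • z) * Real.exp (-‖z‖ ^ 2 / 2) := by
        rw [← mul_assoc, sqrt_pow_mul_const ht]

lemma gauss_total : ∫ z : E1 d, Real.exp (-‖z‖ ^ 2 / 2) =
    (2 * Real.pi) ^ ((d : ℝ) / 2) := by
  have h := GaussianFourier.integral_rexp_neg_mul_sq_norm (V := E1 d) (b := 1/2) (by norm_num)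
  rw [finrank_euclideanSpace_fin] at h
  calc ∫ z : E1 d, Real.exp (-‖z‖ ^ 2 / 2)
      = ∫ z : E1 d, Real.exp (-(1/2) * ‖z‖ ^ 2) := by
        congr 1; funext z; congr 1; ring
    _ = (Real.pi / (1/2)) ^ ((d : ℝ) / 2) := h
    _ = (2 * Real.pi) ^ ((d : ℝ) / 2) := by
        congr 1; field_simp

lemma tendsto_limit (f : SchwartzMap (E1 d) ℝ) (x : E1 d) :
    Filter.Tendsto (fun t => (2 * Real.pi) ^ (-(d : ℝ) / 2) *
        ∫ z : E1 d, f (x + Real.sqrt t • z) * Real.exp (-‖z‖ ^ 2 / 2))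
      (nhdsWithin 0 (Set.Ioi 0)) (nhds (f x)) := by
  obtain ⟨Cf, -, hCf⟩ := f.decay 0 0
  have hCf' : ∀ z, ‖f z‖ ≤ Cf := fun z => by simpa using hCf z
  have hbd : Integrable (fun z : E1 d => Cf * Real.exp (-‖z‖ ^ 2 / 2)) := by
    apply ((integrable_gauss (d := d) (b := 1/2) (by norm_num)).const_mul Cf).congr
    filter_upwards with z
    congr 2; ring
  have hsq : Filter.Tendsto Real.sqrt (nhdsWithin (0:ℝ) (Set.Ioi 0)) (nhds 0) := by
    have h0 : Filter.Tendsto Real.sqrt (nhds (0:ℝ)) (nhds (Real.sqrt 0)) :=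
      Real.continuous_sqrt.tendsto 0
    rw [Real.sqrt_zero] at h0
    exact h0.mono_left nhdsWithin_le_nhds
  have hmain : Filter.Tendsto (fun t => ∫ z : E1 d,
      f (x + Real.sqrt t • z) * Real.exp (-‖z‖ ^ 2 / 2))
      (nhdsWithin 0 (Set.Ioi 0)) (nhds (∫ z : E1 d, f x * Real.exp (-‖z‖ ^ 2 / 2))) := by
    apply MeasureTheory.tendsto_integral_filter_of_dominated_convergence
      (bound := fun z => Cf * Real.exp (-‖z‖ ^ 2 / 2))
    · filter_upwards with t
      apply Continuous.aestronglyMeasurable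
      exact (f.continuous.comp (continuous_const.add
        (continuous_id.const_smul (Real.sqrt t)))).mul
        (((continuous_norm.pow 2).neg.div_const 2).rexp)
    · filter_upwards with t
      filter_upwards with z
      rw [norm_mul, Real.norm_of_nonneg (Real.exp_nonneg _)]
      exact mul_le_mul_of_nonneg_right (hCf' _) (Real.exp_nonneg _)
    · exact hbd
    · filter_upwards with z
      have h1 : Filter.Tendsto (fun t => x + Real.sqrt t • z)
          (nhdsWithin 0 (Set.Ioi 0)) (nhds x) := by
        have h2 := tendsto_const_nhds (x := x) (f := nhdsWithin (0:ℝ) (Set.Ioi 0)) |>.add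
          (hsq.smul_const z)
        simpa using h2
      exact ((f.continuous.tendsto x).comp h1).mul_const _
  have hval : ∫ z : E1 d, f x * Real.exp (-‖z‖ ^ 2 / 2) =
      f x * (2 * Real.pi) ^ ((d : ℝ) / 2) := by
    rw [MeasureTheory.integral_const_mul, gauss_total]
  rw [hval] at hmain
  have := hmain.const_mul ((2 * Real.pi) ^ (-(d : ℝ) / 2))
  have hfin : (2 * Real.pi) ^ (-(d : ℝ) / 2) * (f x * (2 * Real.pi) ^ ((d : ℝ) / 2))
      = f x := by
    rw [mul_comm (f x) _, ← mul_assoc, ← Real.rpow_add (by positivity)]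
    rw [show (-(d:ℝ)/2 + (d:ℝ)/2) = 0 by ring, Real.rpow_zero, one_mul]
  rwa [hfin] at this
end Subst

section Spatial

variable {d : ℕ}

lemma Kt_le {t : ℝ} (ht : 0 < t) (w : E1 d) :
    Kt d t w ≤ (2 * Real.pi * t) ^ (-(d : ℝ) / 2) := by
  unfold Kt
  have h1 : Real.exp (-‖w‖ ^ 2 / (2 * t)) ≤ 1 := by
    apply Real.exp_le_one_iff.2
    have : (0:ℝ) ≤ ‖w‖ ^ 2 / (2 * t) := by positivity
    linarith [neg_div (2*t) (‖w‖^2)]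
  calc (2 * Real.pi * t) ^ (-(d : ℝ) / 2) * Real.exp (-‖w‖ ^ 2 / (2 * t))
      ≤ (2 * Real.pi * t) ^ (-(d : ℝ) / 2) * 1 :=
        mul_le_mul_of_nonneg_left h1 (Real.rpow_nonneg (by positivity) _)
    _ = (2 * Real.pi * t) ^ (-(d : ℝ) / 2) := mul_one _

lemma Kt_pow_le {t : ℝ} (ht : 0 < t) (k : ℕ) (w : E1 d) :
    Kt d t w * ‖w‖ ^ k ≤
      (2 * Real.pi * t) ^ (-(d : ℝ) / 2) * (2 + 4 * k * t) ^ k := by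
  unfold Kt
  rw [mul_assoc]
  apply mul_le_mul_of_nonneg_left _ (Real.rpow_nonneg (by positivity) _)
  have ha : (0:ℝ) < 1 / (2 * t) := by positivity
  have h1 : Real.exp (-‖w‖ ^ 2 / (2 * t)) * ‖w‖ ^ k
      ≤ (1 + ‖w‖) ^ k * Real.exp (-(1 / (2 * t) * ‖w‖ ^ 2)) := by
    rw [exp_arg_eq ht, mul_comm]
    apply mul_le_mul_of_nonneg_right _ (Real.exp_nonneg _)
    exact pow_le_pow_left₀ (norm_nonneg _) (by linarith [norm_nonneg w]) k
  calc Real.exp (-‖w‖ ^ 2 / (2 * t)) * ‖w‖ ^ k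
      ≤ (1 + ‖w‖) ^ k * Real.exp (-(1 / (2 * t) * ‖w‖ ^ 2)) := h1
    _ ≤ (2 + 2 * k / (1 / (2 * t))) ^ k *
          Real.exp (-(1 / (2 * t) / 2 * ‖w‖ ^ 2)) :=
        poly_gauss_bound ha k (norm_nonneg w)
    _ ≤ (2 + 2 * k / (1 / (2 * t))) ^ k * 1 := by
        apply mul_le_mul_of_nonneg_left _ (by positivity)
        exact Real.exp_le_one_iff.2 (by nlinarith [sq_nonneg ‖w‖])
    _ = (2 + 4 * k * t) ^ k := by
        rw [mul_one]; congr 1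
        rw [div_div_eq_mul_div, div_one]; ring

lemma translate (f : SchwartzMap (E1 d) ℝ) (P : E1 d → ℝ) (x : E1 d) :
    ∫ z, f z * P (z - x) = ∫ y, f (x + y) * P y := by
  rw [← MeasureTheory.integral_add_left_eq_self (fun z => f z * P (z - x)) x]
  congr 1; funext y; rw [add_sub_cancel_left]

lemma sum_inner_sq (w : E1 d) :
    ∑ i, (inner ℝ w (EuclideanSpace.single i (1:ℝ)) : ℝ) ^ 2 = ‖w‖ ^ 2 := by
  have h : ∀ i, (inner ℝ w (EuclideanSpace.single i (1:ℝ)) : ℝ) = w i := fun i => by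
    rw [EuclideanSpace.inner_single_right]; simp
  simp_rw [h]
  rw [EuclideanSpace.norm_eq, Real.sq_sqrt (by positivity)]
  congr 1; funext i
  rw [Real.norm_eq_abs, sq_abs]

lemma K_hasFDerivAt {t : ℝ} (ht : 0 < t) (z x : E1 d) :
    HasFDerivAt (fun x' => Kt d t (z - x'))
      ((Kt d t (z - x) / t) • innerSL ℝ (z - x)) x := by
  have h0 : HasFDerivAt (fun x' : E1 d => z - x')
      (-(ContinuousLinearMap.id ℝ (E1 d))) x := (hasFDerivAt_id x).const_sub z
  have h1 := h0.norm_sq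
  have h2 := ((h1.const_mul (1 / (2 * t))).neg).exp
  have h3 := h2.const_mul ((2 * Real.pi * t) ^ (-(d : ℝ) / 2))
  have hfun : (fun x' => Kt d t (z - x')) =
      fun x' => (2 * Real.pi * t) ^ (-(d : ℝ) / 2) *
        Real.exp (-(1 / (2 * t) * ‖z - x'‖ ^ 2)) := by
    funext x'; unfold Kt; rw [exp_arg_eq ht]
  rw [hfun]
  refine h3.congr_fderiv (Eq.symm ?_)
  ext v
  simp only [ContinuousLinearMap.smul_apply, ContinuousLinearMap.coe_smul',
    Pi.smul_apply, ContinuousLinearMap.neg_apply, ContinuousLinearMap.coe_comp',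
    Function.comp_apply, ContinuousLinearMap.id_apply, innerSL_apply_apply,
    smul_eq_mul, nsmul_eq_mul, inner_neg_right, Pi.neg_apply]
  unfold Kt
  rw [exp_arg_eq ht]
  push_cast
  field_simp

variable (d) in
noncomputable def Psi (f : SchwartzMap (E1 d) ℝ) (t : ℝ) (i : Fin d) (x' : E1 d) (z : E1 d) :
    E1 d →L[ℝ] ℝ :=
  (f z / t * Kt d t (z - x')) • (-(innerSL ℝ (EuclideanSpace.single i (1:ℝ)))) +
    (inner ℝ (z - x') (EuclideanSpace.single i (1:ℝ)) : ℝ) •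
      ((f z / t) • ((Kt d t (z - x') / t) • innerSL ℝ (z - x')))

lemma Phi_cont (f : SchwartzMap (E1 d) ℝ) {t : ℝ} (x : E1 d) :
    Continuous (fun z => (f z * (Kt d t (z - x) / t)) • innerSL ℝ (z - x)) := by
  refine Continuous.smul (M := ℝ) ?_ ?_
  · exact f.continuous.mul ((Kt_cont.comp (continuous_id.sub continuous_const)).div_const t)
  · exact (innerSL ℝ).continuous.comp (continuous_id.sub continuous_const)

lemma Phi_norm_le (f : SchwartzMap (E1 d) ℝ) {t : ℝ} (ht : 0 < t) (x : E1 d) (z : E1 d) :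
    ‖(f z * (Kt d t (z - x) / t)) • innerSL ℝ (z - x)‖ ≤
      |f z| * ((2 * Real.pi * t) ^ (-(d : ℝ) / 2) * (2 + 4 * t) / t) := by
  refine (ContinuousLinearMap.opNorm_smul_le _ _).trans ?_
  rw [innerSL_apply_norm, Real.norm_eq_abs, abs_mul,
    abs_of_nonneg (div_nonneg (Kt_nonneg ht _) ht.le), mul_assoc]
  apply mul_le_mul_of_nonneg_left _ (abs_nonneg _)
  rw [div_mul_eq_mul_div]
  apply div_le_div_of_nonneg_right ?_ ht.le
  have h := Kt_pow_le ht 1 (z - x)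
  simpa using h

lemma Phi_integrable (f : SchwartzMap (E1 d) ℝ) {t : ℝ} (ht : 0 < t) (x : E1 d) :
    Integrable (fun z => (f z * (Kt d t (z - x) / t)) • innerSL ℝ (z - x)) := by
  apply (((f.integrable (μ := volume)).abs.mul_const
    ((2 * Real.pi * t) ^ (-(d : ℝ) / 2) * (2 + 4 * t) / t)).mono'
    (Phi_cont f x).aestronglyMeasurable)
  filter_upwards with z
  exact Phi_norm_le f ht x z

lemma U_hasFDerivAt (f : SchwartzMap (E1 d) ℝ) {t : ℝ} (ht : 0 < t) (x : E1 d) :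
    HasFDerivAt (fun x' => ∫ z, f z * Kt d t (z - x'))
      (∫ z, (f z * (Kt d t (z - x) / t)) • innerSL ℝ (z - x)) x := by
  obtain ⟨Mf, -, hMf'⟩ := f.decay 0 0
  apply hasFDerivAt_integral_of_dominated_of_fderiv_le
    (F' := fun x' z => (f z * (Kt d t (z - x') / t)) • innerSL ℝ (z - x'))
    (bound := fun z => |f z| * ((2 * Real.pi * t) ^ (-(d : ℝ) / 2) * (2 + 4 * t) / t))
    (hs := Metric.ball_mem_nhds _ one_pos)
  · filter_upwards with x'
    exact (f.continuous.mul (Kt_cont.comp (continuous_id.sub continuous_const))).aestronglyMeasurable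
  · have hcont : Continuous (fun z : E1 d => f z * Kt d t (z - x)) := by
      exact f.continuous.mul (Kt_cont.comp (continuous_id.sub continuous_const))
    apply ((f.integrable (μ := volume)).abs.mul_const
      ((2 * Real.pi * t) ^ (-(d : ℝ) / 2))).mono' hcont.aestronglyMeasurable
    filter_upwards with z
    rw [Real.norm_eq_abs, abs_mul, abs_of_nonneg (Kt_nonneg ht _)]
    exact mul_le_mul_of_nonneg_left (Kt_le ht _) (abs_nonneg _)
  · exact (Phi_cont f x).aestronglyMeasurable
  · filter_upwards with z x' _
    exact Phi_norm_le f ht x' z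
  · exact (f.integrable (μ := volume)).abs.mul_const _
  · filter_upwards with z x' _
    have h := (K_hasFDerivAt ht z x').const_mul (f z)
    rw [← smul_smul] at *
    exact h

lemma U_fderiv_apply (f : SchwartzMap (E1 d) ℝ) {t : ℝ} (ht : 0 < t) (x : E1 d) (i : Fin d) :
    fderiv ℝ (fun x' => ∫ z, f z * Kt d t (z - x')) x (EuclideanSpace.single i (1:ℝ))
      = ∫ z, f z / t * Kt d t (z - x) * (inner ℝ (z - x) (EuclideanSpace.single i (1:ℝ)) : ℝ) := by
  rw [(U_hasFDerivAt f ht x).fderiv,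
    ContinuousLinearMap.integral_apply (Phi_integrable f ht x)]
  congr 1; funext z
  simp only [ContinuousLinearMap.smul_apply, innerSL_apply_apply, smul_eq_mul]
  ring

lemma Psi_norm_le (f : SchwartzMap (E1 d) ℝ) {t : ℝ} (ht : 0 < t) (i : Fin d)
    (x' : E1 d) (z : E1 d) :
    ‖Psi d f t i x' z‖ ≤ |f z| * (((2 * Real.pi * t) ^ (-(d : ℝ) / 2) +
      (2 * Real.pi * t) ^ (-(d : ℝ) / 2) * (2 + 8 * t) ^ 2 / t) / t) := by
  set c0 : ℝ := (2 * Real.pi * t) ^ (-(d : ℝ) / 2) with hc0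
  have hc0nn : (0:ℝ) ≤ c0 := Real.rpow_nonneg (by positivity) _
  have hK := Kt_le ht (z - x')
  have hK2 : Kt d t (z - x') * ‖z - x'‖ ^ 2 ≤ c0 * (2 + 8 * t) ^ 2 := by
    have h := Kt_pow_le ht 2 (z - x')
    calc Kt d t (z - x') * ‖z - x'‖ ^ 2 ≤ c0 * (2 + 4 * (2:ℕ) * t) ^ 2 := h
      _ = c0 * (2 + 8 * t) ^ 2 := by norm_num
  have hKnn := Kt_nonneg ht (z - x')
  unfold Psi
  refine (norm_add_le _ _).trans ?_
  have h1 : ‖(f z / t * Kt d t (z - x')) • (-(innerSL ℝ (EuclideanSpace.single i (1:ℝ))))‖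
      ≤ |f z| / t * Kt d t (z - x') := by
    refine (ContinuousLinearMap.opNorm_smul_le _ _).trans ?_
    rw [norm_neg, innerSL_apply_norm, EuclideanSpace.norm_single, norm_one, mul_one,
      Real.norm_eq_abs, abs_mul, abs_div, abs_of_pos ht, abs_of_nonneg hKnn]
  have h2 : ‖(inner ℝ (z - x') (EuclideanSpace.single i (1:ℝ)) : ℝ) •
      ((f z / t) • ((Kt d t (z - x') / t) • innerSL ℝ (z - x')))‖
      ≤ ‖z - x'‖ * (|f z| / t * (Kt d t (z - x') / t * ‖z - x'‖)) := by
    refine (ContinuousLinearMap.opNorm_smul_le _ _).trans ?_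
    apply mul_le_mul
    · rw [Real.norm_eq_abs, ← Real.norm_eq_abs]
      calc ‖(inner ℝ (z - x') (EuclideanSpace.single i (1:ℝ)) : ℝ)‖
          ≤ ‖z - x'‖ * ‖EuclideanSpace.single i (1:ℝ)‖ := norm_inner_le_norm _ _
        _ = ‖z - x'‖ := by rw [EuclideanSpace.norm_single, norm_one, mul_one]
    · refine (ContinuousLinearMap.opNorm_smul_le _ _).trans ?_
      rw [Real.norm_eq_abs, abs_div, abs_of_pos ht]
      apply mul_le_mul_of_nonneg_left _ (by positivity)
      refine (ContinuousLinearMap.opNorm_smul_le _ _).trans ?_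
      rw [innerSL_apply_norm, Real.norm_eq_abs, abs_div, abs_of_pos ht,
        abs_of_nonneg hKnn]
    · exact norm_nonneg _
    · exact norm_nonneg _
  calc _ ≤ |f z| / t * Kt d t (z - x') +
        ‖z - x'‖ * (|f z| / t * (Kt d t (z - x') / t * ‖z - x'‖)) := add_le_add h1 h2
    _ = |f z| / t * Kt d t (z - x') +
        |f z| / t * (Kt d t (z - x') * ‖z - x'‖ ^ 2) / t := by ring
    _ ≤ |f z| / t * c0 + |f z| / t * (c0 * (2 + 8 * t) ^ 2) / t := by
        apply add_le_add
        · exact mul_le_mul_of_nonneg_left hK (by positivity)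
        · apply div_le_div_of_nonneg_right ?_ ht.le
          exact mul_le_mul_of_nonneg_left hK2 (by positivity)
    _ = |f z| * ((c0 + c0 * (2 + 8 * t) ^ 2 / t) / t) := by ring

lemma Psi_cont (f : SchwartzMap (E1 d) ℝ) {t : ℝ} (i : Fin d) (x' : E1 d) :
    Continuous (Psi d f t i x') := by
  unfold Psi
  apply Continuous.add
  · exact ((f.continuous.div_const t).mul
      (Kt_cont.comp (continuous_id.sub continuous_const))).smul continuous_const
  · refine Continuous.smul (M := ℝ) ?_ ?_
    · exact (continuous_id.sub continuous_const).inner continuous_const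
    · exact ((f.continuous.div_const t).smul
        (((Kt_cont.comp (continuous_id.sub continuous_const)).div_const t).smul
          ((innerSL ℝ).continuous.comp (continuous_id.sub continuous_const))))

lemma Psi_integrable (f : SchwartzMap (E1 d) ℝ) {t : ℝ} (ht : 0 < t) (i : Fin d)
    (x : E1 d) : Integrable (Psi d f t i x) := by
  apply (((f.integrable (μ := volume)).abs.mul_const _).mono'
    (Psi_cont f i x).aestronglyMeasurable)
  filter_upwards with z
  exact Psi_norm_le f ht i x z

lemma Gi_hasFDerivAt (f : SchwartzMap (E1 d) ℝ) {t : ℝ} (ht : 0 < t) (i : Fin d)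
    (x : E1 d) :
    HasFDerivAt (fun x' => ∫ z, f z / t * Kt d t (z - x') *
        (inner ℝ (z - x') (EuclideanSpace.single i (1:ℝ)) : ℝ))
      (∫ z, Psi d f t i x z) x := by
  apply hasFDerivAt_integral_of_dominated_of_fderiv_le
    (F' := fun x' z => Psi d f t i x' z)
    (bound := fun z => |f z| * (((2 * Real.pi * t) ^ (-(d : ℝ) / 2) +
      (2 * Real.pi * t) ^ (-(d : ℝ) / 2) * (2 + 8 * t) ^ 2 / t) / t))
    (hs := Metric.ball_mem_nhds _ one_pos)
  · filter_upwards with x'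
    apply Continuous.aestronglyMeasurable
    exact ((f.continuous.div_const t).mul
      (Kt_cont.comp (continuous_id.sub continuous_const))).mul
      ((continuous_id.sub continuous_const).inner continuous_const)
  · apply (((f.integrable (μ := volume)).abs.mul_const
      ((2 * Real.pi * t) ^ (-(d : ℝ) / 2) * (2 + 4 * t) / t)).mono' ?_ ?_)
    · apply Continuous.aestronglyMeasurable
      exact ((f.continuous.div_const t).mul
        (Kt_cont.comp (continuous_id.sub continuous_const))).mul
        ((continuous_id.sub continuous_const).inner continuous_const)
    · filter_upwards with z
      have h := Phi_norm_le f ht x z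
      rw [Real.norm_eq_abs]
      calc |f z / t * Kt d t (z - x) * (inner ℝ (z - x) (EuclideanSpace.single i (1:ℝ)) : ℝ)|
          = ‖((f z * (Kt d t (z - x) / t)) • innerSL ℝ (z - x)) (EuclideanSpace.single i (1:ℝ))‖ := by
            rw [Real.norm_eq_abs]; congr 1
            simp only [ContinuousLinearMap.smul_apply, innerSL_apply_apply, smul_eq_mul]
            ring
        _ ≤ ‖(f z * (Kt d t (z - x) / t)) • innerSL ℝ (z - x)‖ *
              ‖EuclideanSpace.single i (1:ℝ)‖ := by
            apply ContinuousLinearMap.le_opNorm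
        _ ≤ |f z| * ((2 * Real.pi * t) ^ (-(d : ℝ) / 2) * (2 + 4 * t) / t) := by
            rw [EuclideanSpace.norm_single, norm_one, mul_one]
            exact h
  · exact (Psi_cont f i x).aestronglyMeasurable
  · filter_upwards with z x' _
    exact Psi_norm_le f ht i x' z
  · exact (f.integrable (μ := volume)).abs.mul_const _
  · filter_upwards with z x' _
    have hc := (K_hasFDerivAt ht z x').const_mul (f z / t)
    have hd : HasFDerivAt (fun x'' : E1 d =>
        (inner ℝ (z - x'') (EuclideanSpace.single i (1:ℝ)) : ℝ))
        (-(innerSL ℝ (EuclideanSpace.single i (1:ℝ)))) x' := by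
      have hl := ((innerSL ℝ (EuclideanSpace.single i (1:ℝ))).hasFDerivAt
        (x := z - x')).comp x' ((hasFDerivAt_id x').const_sub z)
      have hl2 : HasFDerivAt (fun x'' : E1 d =>
          (inner ℝ (z - x'') (EuclideanSpace.single i (1:ℝ)) : ℝ))
          ((innerSL ℝ (EuclideanSpace.single i (1:ℝ))).comp
            (-(ContinuousLinearMap.id ℝ (E1 d)))) x' := by
        apply hl.congr_of_eventuallyEq
        filter_upwards with x''
        simp only [Function.comp_apply, innerSL_apply_apply]
        exact real_inner_comm _ _
      refine hl2.congr_fderiv (Eq.symm ?_)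
      ext v
      simp [inner_neg_right]
    have := hc.mul hd
    unfold Psi
    exact this

lemma Gi_fderiv_apply (f : SchwartzMap (E1 d) ℝ) {t : ℝ} (ht : 0 < t) (i : Fin d)
    (x : E1 d) :
    fderiv ℝ (fun x' => ∫ z, f z / t * Kt d t (z - x') *
        (inner ℝ (z - x') (EuclideanSpace.single i (1:ℝ)) : ℝ)) x
        (EuclideanSpace.single i (1:ℝ))
      = ∫ z, f z / t * Kt d t (z - x) *
          ((inner ℝ (z - x) (EuclideanSpace.single i (1:ℝ)) : ℝ) ^ 2 / t - 1) := by
  rw [(Gi_hasFDerivAt f ht i x).fderiv,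
    ContinuousLinearMap.integral_apply (Psi_integrable f ht i x)]
  congr 1; funext z
  unfold Psi
  simp only [ContinuousLinearMap.add_apply, ContinuousLinearMap.smul_apply,
    ContinuousLinearMap.neg_apply, innerSL_apply_apply, smul_eq_mul,
    real_inner_self_eq_norm_sq, EuclideanSpace.norm_single, norm_one]
  ring

lemma rpow_hasDerivAt {t : ℝ} (ht : 0 < t) :
    HasDerivAt (fun s : ℝ => (2 * Real.pi * s) ^ (-(d : ℝ) / 2))
      (-(d : ℝ) / 2 * (2 * Real.pi * t) ^ (-(d : ℝ) / 2 - 1) * (2 * Real.pi)) t := by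
  have h1 : HasDerivAt (fun s : ℝ => 2 * Real.pi * s) (2 * Real.pi) t := by
    simpa using (hasDerivAt_id t).const_mul (2 * Real.pi)
  have h2 := Real.hasDerivAt_rpow_const (x := 2 * Real.pi * t) (p := -(d : ℝ) / 2)
    (Or.inl (by positivity))
  exact h2.comp t h1

lemma exp_hasDerivAt {t : ℝ} (ht : 0 < t) (y : E1 d) :
    HasDerivAt (fun s : ℝ => Real.exp (-‖y‖ ^ 2 / (2 * s)))
      (Real.exp (-‖y‖ ^ 2 / (2 * t)) * (‖y‖ ^ 2 / (2 * t ^ 2))) t := by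
  have h0 : HasDerivAt (fun s : ℝ => -‖y‖ ^ 2 / 2 * s⁻¹)
      (-‖y‖ ^ 2 / 2 * -(t ^ 2)⁻¹) t := (hasDerivAt_inv (ne_of_gt ht)).const_mul _
  have harg : ∀ s : ℝ, -‖y‖ ^ 2 / (2 * s) = -‖y‖ ^ 2 / 2 * s⁻¹ := fun s => by ring
  have h2 := h0.exp
  have hfun : (fun s : ℝ => Real.exp (-‖y‖ ^ 2 / (2 * s))) =
      fun s : ℝ => Real.exp (-‖y‖ ^ 2 / 2 * s⁻¹) := by funext s; rw [harg]
  rw [hfun]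
  convert h2 using 1
  rw [← harg]
  ring

lemma Fs_hasDerivAt (c : ℝ) {s : ℝ} (hs : 0 < s) (y : E1 d) :
    HasDerivAt (fun s' : ℝ => c * ((2 * Real.pi * s') ^ (-(d : ℝ) / 2) *
        Real.exp (-‖y‖ ^ 2 / (2 * s'))))
      (c * (Kt d s y * (‖y‖ ^ 2 / (2 * s ^ 2) - d / (2 * s)))) s := by
  have h := ((rpow_hasDerivAt (d := d) hs).mul (exp_hasDerivAt hs y)).const_mul c
  refine h.congr_deriv (Eq.symm ?_)
  unfold Kt
  have hpi : Real.pi ≠ 0 := Real.pi_ne_zero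
  have hs' : s ≠ 0 := ne_of_gt hs
  rw [show (-(d:ℝ)/2 - 1) = (-(d:ℝ)/2) + (-1) from by ring,
    Real.rpow_add (by positivity), Real.rpow_neg_one]
  field_simp
  ring

lemma t_hasDerivAt (f : SchwartzMap (E1 d) ℝ) {t : ℝ} (ht : 0 < t) (x : E1 d) :
    HasDerivAt (fun s => ∫ y, f (x + y) * ((2 * Real.pi * s) ^ (-(d : ℝ) / 2) *
        Real.exp (-‖y‖ ^ 2 / (2 * s))))
      (∫ y, f (x + y) * (Kt d t y * (‖y‖ ^ 2 / (2 * t ^ 2) - d / (2 * t)))) t := by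
  obtain ⟨Mf, hMfpos, hMf'⟩ := f.decay 0 0
  have hMf : ∀ z, |f z| ≤ Mf := fun z => by
    have := hMf' z; rw [pow_zero, one_mul, norm_iteratedFDeriv_zero] at this
    simpa [Real.norm_eq_abs] using this
  refine (hasDerivAt_integral_of_dominated_loc_of_deriv_le (hs := Metric.ball_mem_nhds t (half_pos ht))
    (F' := fun s y => f (x + y) * (Kt d s y * (‖y‖ ^ 2 / (2 * s ^ 2) - d / (2 * s))))
    (bound := fun y => Mf * ((Real.pi * t) ^ (-(d : ℝ) / 2) *
      ((2 / t ^ 2 + d / t) * ((1 + ‖y‖) ^ 2 * Real.exp (-(1 / (3 * t) * ‖y‖ ^ 2))))))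
    ?_ ?_ ?_ ?_ ?_ ?_).2
  · filter_upwards with s
    apply Continuous.aestronglyMeasurable
    exact (f.continuous.comp (continuous_const.add continuous_id)).mul
      (continuous_const.mul (((continuous_norm.pow 2).neg.div_const (2 * s)).rexp))
  · have hcont : Continuous (fun y : E1 d => f (x + y) *
        ((2 * Real.pi * t) ^ (-(d : ℝ) / 2) * Real.exp (-‖y‖ ^ 2 / (2 * t)))) :=
      (f.continuous.comp (continuous_const.add continuous_id)).mul
        (continuous_const.mul (((continuous_norm.pow 2).neg.div_const (2 * t)).rexp))
    apply (((integrable_gauss (d := d) (b := 1 / (2 * t)) (by positivity)).const_mul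
      ((2 * Real.pi * t) ^ (-(d : ℝ) / 2))).const_mul Mf).mono' hcont.aestronglyMeasurable
    filter_upwards with y
    rw [Real.norm_eq_abs, abs_mul]
    have h1 : |(2 * Real.pi * t) ^ (-(d : ℝ) / 2) * Real.exp (-‖y‖ ^ 2 / (2 * t))|
        = (2 * Real.pi * t) ^ (-(d : ℝ) / 2) * Real.exp (-(1 / (2 * t) * ‖y‖ ^ 2)) := by
      rw [abs_of_nonneg (by positivity), exp_arg_eq ht]
    rw [h1]
    exact mul_le_mul (hMf _) le_rfl (by positivity) hMfpos.le
  · apply Continuous.aestronglyMeasurable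
    exact (f.continuous.comp (continuous_const.add continuous_id)).mul
      ((Kt_cont).mul (((continuous_norm.pow 2).div_const (2 * t ^ 2)).sub
        continuous_const))
  · filter_upwards with y s hsmem
    rw [Metric.mem_ball, Real.dist_eq, abs_sub_lt_iff] at hsmem
    have hs2 : t / 2 < s := by linarith [hsmem.2]
    have hs3 : s < 3 * t / 2 := by linarith [hsmem.1]
    have hs : 0 < s := lt_trans (half_pos ht) hs2
    have hKtb : Kt d s y ≤ (Real.pi * t) ^ (-(d : ℝ) / 2) *
        Real.exp (-(1 / (3 * t) * ‖y‖ ^ 2)) := by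
      unfold Kt
      apply mul_le_mul
      · apply Real.rpow_le_rpow_of_nonpos (by positivity) (by nlinarith [Real.pi_pos])
        rw [neg_div]
        simp only [Left.neg_nonpos_iff]
        positivity
      · apply Real.exp_le_exp.2
        rw [neg_div]
        apply neg_le_neg
        have h23 : 1 / (3 * t) ≤ 1 / (2 * s) := by
          apply one_div_le_one_div_of_le (by positivity)
          linarith
        calc 1 / (3 * t) * ‖y‖ ^ 2 ≤ 1 / (2 * s) * ‖y‖ ^ 2 :=
              mul_le_mul_of_nonneg_right h23 (sq_nonneg _)
          _ = ‖y‖ ^ 2 / (2 * s) := by ring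
      · exact Real.exp_nonneg _
      · positivity
    have hQb : |‖y‖ ^ 2 / (2 * s ^ 2) - d / (2 * s)| ≤
        (2 / t ^ 2 + d / t) * (1 + ‖y‖) ^ 2 := by
      have h1 : |‖y‖ ^ 2 / (2 * s ^ 2) - d / (2 * s)| ≤
          ‖y‖ ^ 2 / (2 * s ^ 2) + d / (2 * s) := by
        refine (abs_sub _ _).trans ?_
        rw [abs_of_nonneg (by positivity), abs_of_nonneg (by positivity)]
      have h2 : ‖y‖ ^ 2 / (2 * s ^ 2) ≤ 2 / t ^ 2 * (1 + ‖y‖) ^ 2 := by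
        have hss : t ^ 2 / 4 ≤ s ^ 2 := by nlinarith
        have hle : ‖y‖ ^ 2 / (2 * s ^ 2) ≤ ‖y‖ ^ 2 / (2 * (t ^ 2 / 4)) := by
          apply div_le_div_of_nonneg_left (sq_nonneg _) (by positivity) (by nlinarith)
        calc ‖y‖ ^ 2 / (2 * s ^ 2) ≤ ‖y‖ ^ 2 / (2 * (t ^ 2 / 4)) := hle
          _ = 2 / t ^ 2 * ‖y‖ ^ 2 := by
              field_simp
              ring
          _ ≤ 2 / t ^ 2 * (1 + ‖y‖) ^ 2 := by
              apply mul_le_mul_of_nonneg_left (by nlinarith [norm_nonneg y]) (by positivity)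
      have h3 : (d : ℝ) / (2 * s) ≤ d / t * (1 + ‖y‖) ^ 2 := by
        have hd : (0:ℝ) ≤ d := Nat.cast_nonneg d
        have h1y : (1:ℝ) ≤ (1 + ‖y‖) ^ 2 := by nlinarith [norm_nonneg y]
        have ha : (d : ℝ) / (2 * s) ≤ (d:ℝ) / t :=
          div_le_div_of_nonneg_left hd ht (by linarith)
        calc (d : ℝ) / (2 * s) ≤ (d:ℝ) / t := ha
          _ ≤ (d:ℝ) / t * (1 + ‖y‖) ^ 2 := le_mul_of_one_le_right (by positivity) h1y

      calc |‖y‖ ^ 2 / (2 * s ^ 2) - d / (2 * s)| ≤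
            ‖y‖ ^ 2 / (2 * s ^ 2) + d / (2 * s) := h1
        _ ≤ 2 / t ^ 2 * (1 + ‖y‖) ^ 2 + d / t * (1 + ‖y‖) ^ 2 := add_le_add h2 h3
        _ = (2 / t ^ 2 + d / t) * (1 + ‖y‖) ^ 2 := by ring
    calc ‖f (x + y) * (Kt d s y * (‖y‖ ^ 2 / (2 * s ^ 2) - d / (2 * s)))‖
        = |f (x + y)| * (Kt d s y * |‖y‖ ^ 2 / (2 * s ^ 2) - d / (2 * s)|) := by
          rw [Real.norm_eq_abs, abs_mul, abs_mul, abs_of_nonneg (Kt_nonneg hs y)]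
      _ ≤ Mf * (((Real.pi * t) ^ (-(d : ℝ) / 2) * Real.exp (-(1 / (3 * t) * ‖y‖ ^ 2))) *
            ((2 / t ^ 2 + d / t) * (1 + ‖y‖) ^ 2)) := by
          apply mul_le_mul (hMf _) _ (mul_nonneg (Kt_nonneg hs y) (abs_nonneg _)) hMfpos.le
          exact mul_le_mul hKtb hQb (abs_nonneg _) (by positivity)
      _ = Mf * ((Real.pi * t) ^ (-(d : ℝ) / 2) *
            ((2 / t ^ 2 + d / t) * ((1 + ‖y‖) ^ 2 * Real.exp (-(1 / (3 * t) * ‖y‖ ^ 2))))) := by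
          ring
  · exact ((((integrable_poly_gauss (d := d) (b := 1 / (3 * t)) (by positivity) 2).const_mul
      (2 / t ^ 2 + d / t)).const_mul ((Real.pi * t) ^ (-(d : ℝ) / 2))).const_mul Mf)
  · filter_upwards with y s hsmem
    rw [Metric.mem_ball, Real.dist_eq, abs_sub_lt_iff] at hsmem
    have hs : 0 < s := by linarith [hsmem.2, half_pos ht]
    exact Fs_hasDerivAt (f (x + y)) hs y

lemma foldr_if_eq (i : Fin d) (g : EuclideanSpace ℝ (Fin d) → ℝ) :
    ∀ l : List (Fin d), l.Nodup →
      List.foldr (fun j h => (pderiv1 d j)^[if j = i then 2 else 0] h) g l =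
        if i ∈ l then (pderiv1 d i)^[2] g else g := by
  intro l
  induction l with
  | nil => simp
  | cons a l ih =>
    intro hnd
    rw [List.foldr_cons, ih hnd.of_cons]
    by_cases hai : a = i
    · subst hai
      have hnotmem : a ∉ l := (List.nodup_cons.1 hnd).1
      rw [if_neg hnotmem, if_pos rfl, if_pos List.mem_cons_self]
    · rw [if_neg hai]
      simp only [Function.iterate_zero, id]
      by_cases hil : i ∈ l
      · rw [if_pos hil, if_pos (List.mem_cons.2 (Or.inr hil))]
      · rw [if_neg hil, if_neg (by
          rw [List.mem_cons]
          rintro (h | h)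
          · exact hai h.symm
          · exact hil h)]

lemma multiDeriv_if_eq (i : Fin d) (g : EuclideanSpace ℝ (Fin d) → ℝ) :
    multiDeriv d (fun j => if j = i then 2 else 0) g = (pderiv1 d i)^[2] g := by
  unfold multiDeriv
  rw [foldr_if_eq i g (List.finRange d) (List.nodup_finRange d),
    if_pos (List.mem_finRange i)]

lemma Hi_integrable (f : SchwartzMap (E1 d) ℝ) {t : ℝ} (ht : 0 < t) (x : E1 d)
    (i : Fin d) :
    Integrable (fun z => f z / t * Kt d t (z - x) *
      ((inner ℝ (z - x) (EuclideanSpace.single i (1:ℝ)) : ℝ) ^ 2 / t - 1)) := by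
  set c0 : ℝ := (2 * Real.pi * t) ^ (-(d : ℝ) / 2) with hc0
  have hcont : Continuous (fun z : E1 d => f z / t * Kt d t (z - x) *
      ((inner ℝ (z - x) (EuclideanSpace.single i (1:ℝ)) : ℝ) ^ 2 / t - 1)) := by
    apply Continuous.mul
    · exact (f.continuous.div_const t).mul (Kt_cont.comp (continuous_id.sub continuous_const))
    · exact ((((continuous_id.sub continuous_const).inner continuous_const).pow 2).div_const
        t).sub continuous_const
  apply (((f.integrable (μ := volume)).abs.mul_const
    ((c0 * (2 + 8 * t) ^ 2 / t + c0) / t)).mono' hcont.aestronglyMeasurable)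
  filter_upwards with z
  have hKnn := Kt_nonneg ht (z - x)
  have hq : (inner ℝ (z - x) (EuclideanSpace.single i (1:ℝ)) : ℝ) ^ 2 ≤ ‖z - x‖ ^ 2 := by
    have h1 : ‖(inner ℝ (z - x) (EuclideanSpace.single i (1:ℝ)) : ℝ)‖ ≤ ‖z - x‖ := by
      calc ‖(inner ℝ (z - x) (EuclideanSpace.single i (1:ℝ)) : ℝ)‖
          ≤ ‖z - x‖ * ‖EuclideanSpace.single i (1:ℝ)‖ := norm_inner_le_norm _ _
        _ = ‖z - x‖ := by rw [EuclideanSpace.norm_single, norm_one, mul_one]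
    calc (inner ℝ (z - x) (EuclideanSpace.single i (1:ℝ)) : ℝ) ^ 2
        = ‖(inner ℝ (z - x) (EuclideanSpace.single i (1:ℝ)) : ℝ)‖ ^ 2 := by
          rw [Real.norm_eq_abs, sq_abs]
      _ ≤ ‖z - x‖ ^ 2 := pow_le_pow_left₀ (norm_nonneg _) h1 2
  have hK2 : Kt d t (z - x) * ‖z - x‖ ^ 2 ≤ c0 * (2 + 8 * t) ^ 2 := by
    have h := Kt_pow_le ht 2 (z - x)
    calc Kt d t (z - x) * ‖z - x‖ ^ 2 ≤ c0 * (2 + 4 * (2:ℕ) * t) ^ 2 := h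
      _ = c0 * (2 + 8 * t) ^ 2 := by norm_num
  rw [Real.norm_eq_abs, abs_mul, abs_mul, abs_div, abs_of_pos ht,
    abs_of_nonneg hKnn]
  calc |f z| / t * Kt d t (z - x) *
        |(inner ℝ (z - x) (EuclideanSpace.single i (1:ℝ)) : ℝ) ^ 2 / t - 1|
      ≤ |f z| / t * Kt d t (z - x) *
        ((inner ℝ (z - x) (EuclideanSpace.single i (1:ℝ)) : ℝ) ^ 2 / t + 1) := by
        apply mul_le_mul_of_nonneg_left _ (by positivity)
        refine (abs_sub _ _).trans ?_
        rw [abs_of_nonneg (by positivity), abs_of_nonneg (by norm_num)]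
    _ = |f z| / t * (Kt d t (z - x) *
          (inner ℝ (z - x) (EuclideanSpace.single i (1:ℝ)) : ℝ) ^ 2 / t +
          Kt d t (z - x)) := by ring
    _ ≤ |f z| / t * (c0 * (2 + 8 * t) ^ 2 / t + c0) := by
        apply mul_le_mul_of_nonneg_left _ (by positivity)
        apply add_le_add _ (Kt_le ht _)
        apply div_le_div_of_nonneg_right _ ht.le
        calc Kt d t (z - x) * (inner ℝ (z - x) (EuclideanSpace.single i (1:ℝ)) : ℝ) ^ 2
            ≤ Kt d t (z - x) * ‖z - x‖ ^ 2 := mul_le_mul_of_nonneg_left hq hKnn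
          _ ≤ c0 * (2 + 8 * t) ^ 2 := hK2
    _ = |f z| * ((c0 * (2 + 8 * t) ^ 2 / t + c0) / t) := by ring

lemma spatial_sum (f : SchwartzMap (E1 d) ℝ) {t : ℝ} (ht : 0 < t) (x : E1 d)
    (u : ℝ → EuclideanSpace ℝ (Fin d) → ℝ)
    (hut : u t = fun x' => ∫ z, f z * Kt d t (z - x')) :
    ∑ i, multiDeriv d (fun j => if j = i then 2 else 0) (u t) x
      = ∫ y, f (x + y) * (Kt d t y * (‖y‖ ^ 2 / t ^ 2 - d / t)) := by
  have hstep : ∀ i : Fin d, multiDeriv d (fun j => if j = i then 2 else 0) (u t) x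
      = ∫ z, f z / t * Kt d t (z - x) *
          ((inner ℝ (z - x) (EuclideanSpace.single i (1:ℝ)) : ℝ) ^ 2 / t - 1) := by
    intro i
    rw [multiDeriv_if_eq]
    have hiter : (pderiv1 d i)^[2] (u t) x = pderiv1 d i (pderiv1 d i (u t)) x := by
      simp [Function.iterate_succ, Function.comp]
    rw [hiter]
    have hfirst : pderiv1 d i (u t) = fun x' => ∫ z, f z / t * Kt d t (z - x') *
        (inner ℝ (z - x') (EuclideanSpace.single i (1:ℝ)) : ℝ) := by
      funext x'
      unfold pderiv1
      rw [hut]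
      exact U_fderiv_apply f ht x' i
    rw [hfirst]
    unfold pderiv1
    exact Gi_fderiv_apply f ht i x
  rw [Finset.sum_congr rfl (fun i _ => hstep i)]
  rw [← MeasureTheory.integral_finset_sum Finset.univ (fun i _ => Hi_integrable f ht x i)]
  have hpt : ∀ z, ∑ i : Fin d, f z / t * Kt d t (z - x) *
      ((inner ℝ (z - x) (EuclideanSpace.single i (1:ℝ)) : ℝ) ^ 2 / t - 1)
      = f z * ((fun w => Kt d t w * (‖w‖ ^ 2 / t ^ 2 - d / t)) (z - x)) := by
    intro z
    rw [← Finset.mul_sum, Finset.sum_sub_distrib, Finset.sum_const, ← Finset.sum_div,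
      sum_inner_sq]
    simp only [Finset.card_univ, Fintype.card_fin, nsmul_eq_mul, mul_one]
    ring
  rw [show (fun z => ∑ i : Fin d, f z / t * Kt d t (z - x) *
      ((inner ℝ (z - x) (EuclideanSpace.single i (1:ℝ)) : ℝ) ^ 2 / t - 1)) =
      fun z => f z * ((fun w => Kt d t w * (‖w‖ ^ 2 / t ^ 2 - d / t)) (z - x)) from
    funext hpt]
  exact translate f (fun w => Kt d t w * (‖w‖ ^ 2 / t ^ 2 - d / t)) x

end Spatial
end HeatPf

/-- The Gaussian convolution `u(t,x) = ∫ f(x+y) (2πt)^{-d/2} e^{-|y|²/(2t)} dy`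
of a Schwartz initial datum `f` solves the heat equation `∂_t u = (1/2)Δu`:
`u(t,·)` is Schwartz for `t > 0`, `u` is differentiable in `t` on `(0,∞)`
with `∂_t u = (1/2)Δu`, and `u(t,x) → f(x)` as `t → 0⁺`. -/
theorem heat_equation_schwartz_solution (d : ℕ)
    (f : SchwartzMap (EuclideanSpace ℝ (Fin d)) ℝ)
    (u : ℝ → EuclideanSpace ℝ (Fin d) → ℝ)
    (hu : ∀ t : ℝ, 0 < t → ∀ x, u t x =
      ∫ y, f (x + y) *
        ((2 * Real.pi * t) ^ (-(d : ℝ) / 2) * Real.exp (-‖y‖ ^ 2 / (2 * t))))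
    (hu0 : ∀ x, u 0 x = f x) :
    (∀ t : ℝ, 0 < t → ∃ g : SchwartzMap (EuclideanSpace ℝ (Fin d)) ℝ,
      ∀ x, g x = u t x) ∧
    (∀ t : ℝ, 0 < t → ∀ x, HasDerivAt (fun s => u s x)
      ((1 / 2) * ∑ i : Fin d,
        multiDeriv d (fun j => if j = i then 2 else 0) (u t) x) t) ∧
    (∀ x, Filter.Tendsto (fun t => u t x)
      (nhdsWithin 0 (Set.Ioi 0)) (nhds (f x))) := open HeatPf in by
  refine ⟨?_, ?_, ?_⟩
  · intro t ht
    refine ⟨convSchwartz Kt_cont (fun k => Kt_moment ht k) f, fun x => ?_⟩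
    rw [hu t ht x]
    show (∫ y, Kt d t y • f (x + y)) = _
    congr 1
    funext y
    rw [smul_eq_mul]
    simp only [Kt]
    ring
  · intro t ht x
    have hut : u t = fun x' => ∫ z, f z * HeatPf.Kt d t (z - x') := by
      funext x'
      rw [hu t ht x']
      have h0 : (∫ y, f (x' + y) * ((2 * Real.pi * t) ^ (-(d : ℝ) / 2) *
          Real.exp (-‖y‖ ^ 2 / (2 * t)))) = ∫ y, f (x' + y) * HeatPf.Kt d t y := rfl
      rw [h0, ← HeatPf.translate f (HeatPf.Kt d t) x']
    have hspatial := spatial_sum f ht x u hut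
    have htd := t_hasDerivAt f ht x
    have hval : (1/2 : ℝ) * ∑ i, multiDeriv d (fun j => if j = i then 2 else 0) (u t) x
        = ∫ y, f (x + y) * (HeatPf.Kt d t y * (‖y‖ ^ 2 / (2 * t ^ 2) - d / (2 * t))) := by
      rw [hspatial, ← MeasureTheory.integral_const_mul]
      congr 1
      funext y
      ring
    rw [hval]
    apply htd.congr_of_eventuallyEq
    filter_upwards [isOpen_Ioi.mem_nhds ht] with s hs
    exact hu s hs x
  · intro x
    refine Filter.Tendsto.congr' ?_ (tendsto_limit f x)
    filter_upwards [self_mem_nhdsWithin] with t htpos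
    rw [← u_subst f htpos x, ← hu t htpos x]
end
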